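/- arXiv:1709.04443 — 5 statements merged into one kernel-verified Lean document; each statement's English description precedes it below -/
import Mathlib

section
/- Let n = 2^e + d with 0 ≤ d < 2^e and let k ≥ 2. Then zcl_k(n) = min(zcl_k(d) + k·2^e, (k−1)(2^{e+1} − 1)), where zcl_k(0) = 0. -/
namespace ZclAux

/-- bits of `x` are contained in bits of `u` -/
lemma bit_subset {x u : ℕ} (h : x &&& u = x) {i : ℕ} (hx : x.testBit i = true) :
    u.testBit i = true := by
  have := congrArg (fun t => t.testBit i) h
  simp only [Nat.testBit_and, hx, Bool.true_and] at this
  exact this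

lemma bit_disj {u v : ℕ} (h : u &&& v = 0) (i : ℕ) :
    ¬(u.testBit i = true ∧ v.testBit i = true) := by
  rintro ⟨h1, h2⟩
  have := congrArg (fun t => t.testBit i) h
  simp [Nat.testBit_and, h1, h2] at this

lemma disj_of_subsets {x y u v : ℕ} (hx : x &&& u = x) (hy : y &&& v = y)
    (h : u &&& v = 0) : x &&& y = 0 := by
  apply Nat.zero_of_testBit_eq_false
  intro i
  rw [Nat.testBit_and]
  cases hxb : x.testBit i with
  | false => simp
  | true =>
    cases hyb : y.testBit i with
    | false => simp
    | true => exact absurd ⟨bit_subset hx hxb, bit_subset hy hyb⟩ (bit_disj h i)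

lemma subset_trans {x y z : ℕ} (h1 : x &&& y = x) (h2 : y &&& z = y) : x &&& z = x := by
  conv_lhs => rw [← h1, Nat.land_assoc, h2]
  exact h1

lemma subset_le {x y : ℕ} (h : x &&& y = x) : x ≤ y := h ▸ Nat.and_le_right

lemma mod_and_self (x E : ℕ) : (x % 2 ^ E) &&& x = x % 2 ^ E := by
  apply Nat.eq_of_testBit_eq
  intro i
  simp only [Nat.testBit_and, Nat.testBit_mod_two_pow]
  cases h : x.testBit i <;> simp

lemma lt_two_pow_of_high_bits {x E : ℕ} (h : ∀ i, E ≤ i → x.testBit i = false) :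
    x < 2 ^ E := by
  have hx : x % 2 ^ E = x := by
    apply Nat.eq_of_testBit_eq
    intro i
    rw [Nat.testBit_mod_two_pow]
    by_cases hi : i < E
    · simp [hi]
    · simp [hi, h i (le_of_not_gt hi)]
  rw [← hx]
  exact Nat.mod_lt _ (Nat.pow_pos (by norm_num))

lemma or_lt_two_pow {x y E : ℕ} (hx : x < 2 ^ E) (hy : y < 2 ^ E) : x ||| y < 2 ^ E := by
  apply lt_two_pow_of_high_bits
  intro i hi
  rw [Nat.testBit_lor]
  have h1 : x < 2 ^ i := lt_of_lt_of_le hx (Nat.pow_le_pow_right (by norm_num) hi)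
  have h2 : y < 2 ^ i := lt_of_lt_of_le hy (Nat.pow_le_pow_right (by norm_num) hi)
  simp [Nat.testBit_lt_two_pow h1, Nat.testBit_lt_two_pow h2]

/-- MASTER: disjoint numbers add without carries -/
lemma disj_add_eq_or : ∀ x : ℕ, ∀ y : ℕ, x &&& y = 0 → x + y = x ||| y := by
  intro x
  induction x using Nat.strong_induction_on with
  | _ x ih =>
    intro y h
    rcases Nat.eq_zero_or_pos x with hx0 | hx0
    · simp [hx0]
    have hdiv : (x / 2) &&& (y / 2) = 0 := by
      apply Nat.zero_of_testBit_eq_false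
      intro i
      have := congrArg (fun t => t.testBit (i + 1)) h
      simpa [Nat.testBit_and, Nat.testBit_div_two] using this
    have hbit0 : ¬(x % 2 = 1 ∧ y % 2 = 1) := by
      rintro ⟨h1, h2⟩
      exact bit_disj h 0 (by simp [Nat.testBit_zero, h1, h2])
    have ih2 : x / 2 + y / 2 = (x / 2) ||| (y / 2) :=
      ih (x / 2) (Nat.div_lt_self hx0 (by norm_num)) _ hdiv
    have key : x ||| y = 2 * ((x / 2) ||| (y / 2)) + (x % 2 + y % 2) := by
      have hlt : x % 2 + y % 2 < 2 := by omega
      apply Nat.eq_of_testBit_eq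
      intro i
      have h2pow : (2 : ℕ) ^ 1 = 2 := by norm_num
      rw [show (2 * ((x / 2) ||| (y / 2)) + (x % 2 + y % 2)) =
          (2 ^ 1 * ((x / 2) ||| (y / 2)) + (x % 2 + y % 2)) by rw [h2pow],
        Nat.testBit_two_pow_mul_add _ (by simpa using hlt)]
      cases i with
      | zero =>
        simp only [Nat.testBit_lor, if_pos (by norm_num : (0:ℕ) < 1)]
        rw [Nat.testBit_zero, Nat.testBit_zero, Nat.testBit_zero]
        have hx2 := Nat.mod_two_eq_zero_or_one x
        have hy2 := Nat.mod_two_eq_zero_or_one y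
        rcases hx2 with h1 | h1 <;> rcases hy2 with h2 | h2 <;>
          simp [h1, h2] <;> omega
      | succ i =>
        simp only [Nat.testBit_lor]
        rw [if_neg (by omega), Nat.add_sub_cancel]
        simp [Nat.testBit_lor, Nat.testBit_div_two]
    calc x + y = 2 * (x / 2 + y / 2) + (x % 2 + y % 2) := by omega
    _ = 2 * ((x / 2) ||| (y / 2)) + (x % 2 + y % 2) := by rw [ih2]
    _ = x ||| y := key.symm

lemma disj_add_lt {x y E : ℕ} (h : x &&& y = 0) (hx : x < 2 ^ E) (hy : y < 2 ^ E) :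
    x + y < 2 ^ E := by
  rw [disj_add_eq_or x y h]; exact or_lt_two_pow hx hy

/-- if `x` and `y` are disjoint then bits of `x` are inside `x + y` -/
lemma and_add_self {x y : ℕ} (h : x &&& y = 0) : x &&& (x + y) = x := by
  rw [disj_add_eq_or x y h]
  apply Nat.eq_of_testBit_eq
  intro i
  simp only [Nat.testBit_and, Nat.testBit_lor]
  cases hx : x.testBit i <;> simp

lemma or_disj {x y z : ℕ} (h1 : x &&& z = 0) (h2 : y &&& z = 0) : (x ||| y) &&& z = 0 := by
  apply Nat.zero_of_testBit_eq_false
  intro i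
  simp only [Nat.testBit_and, Nat.testBit_lor]
  cases hz : z.testBit i with
  | false => simp
  | true =>
    cases hx : x.testBit i with
    | true => exact absurd ⟨hx, hz⟩ (bit_disj h1 i)
    | false =>
      cases hy : y.testBit i with
      | true => exact absurd ⟨hy, hz⟩ (bit_disj h2 i)
      | false => simp

lemma add_disj {x y z : ℕ} (hxy : x &&& y = 0) (h1 : x &&& z = 0) (h2 : y &&& z = 0) :
    (x + y) &&& z = 0 := by
  rw [disj_add_eq_or x y hxy]; exact or_disj h1 h2

/-- bitwise complement within a block -/
lemma ldiff_subset (f r : ℕ) : (f.ldiff r) &&& f = f.ldiff r := by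
  apply Nat.eq_of_testBit_eq
  intro i
  simp only [Nat.testBit_and, Nat.testBit_ldiff]
  cases hf : f.testBit i <;> simp

lemma ldiff_disj (f r : ℕ) : (f.ldiff r) &&& r = 0 := by
  apply Nat.zero_of_testBit_eq_false
  intro i
  simp only [Nat.testBit_and, Nat.testBit_ldiff]
  cases hr : r.testBit i <;> simp

/-- if `r ⊆ f` then `f - r` has bits inside `f`, is disjoint from `r`, and complements it -/
lemma sub_eq_ldiff {r f : ℕ} (h : r &&& f = r) : f - r = f.ldiff r := by
  have hor : (f.ldiff r) ||| r = f := by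
    apply Nat.eq_of_testBit_eq
    intro i
    simp only [Nat.testBit_lor, Nat.testBit_ldiff]
    cases hr : r.testBit i with
    | true => simp [bit_subset h hr]
    | false => simp
  have hadd : f.ldiff r + r = f := by
    rw [disj_add_eq_or _ _ (ldiff_disj f r)]; exact hor
  omega

lemma sub_subset {r f : ℕ} (h : r &&& f = r) : (f - r) &&& f = f - r := by
  rw [sub_eq_ldiff h]; exact ldiff_subset f r

lemma sub_disj_of_subset {r f : ℕ} (h : r &&& f = r) : (f - r) &&& r = 0 := by
  rw [sub_eq_ldiff h]; exact ldiff_disj f r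

/-- complement within `2^E - 1` -/
lemma compl_and : ∀ E x : ℕ, x < 2 ^ E → x &&& (2 ^ E - 1 - x) = 0 := by
  intro E
  induction E with
  | zero => intro x hx; interval_cases x; rfl
  | succ E ih =>
    intro x hx
    have hEpos : 0 < 2 ^ E := Nat.pow_pos (by norm_num)
    have hE1 : (2:ℕ) ^ (E + 1) = 2 ^ E * 2 := pow_succ 2 E
    rcases lt_or_ge x (2 ^ E) with hx' | hx'
    · have hcomplt : 2 ^ E - 1 - x < 2 ^ E := by omega
      have hyeq : 2 ^ (E + 1) - 1 - x = 2 ^ E * 1 + (2 ^ E - 1 - x) := by omega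
      apply Nat.zero_of_testBit_eq_false
      intro i
      rw [Nat.testBit_and, hyeq, Nat.testBit_two_pow_mul_add _ hcomplt]
      by_cases hi : i < E
      · simp only [if_pos hi]
        have := congrArg (fun t => t.testBit i) (ih x hx')
        simpa [Nat.testBit_and] using this
      · simp only [if_neg hi]
        have : x < 2 ^ i := lt_of_lt_of_le hx' (Nat.pow_le_pow_right (by norm_num) (by omega))
        simp [Nat.testBit_lt_two_pow this]
    · set r := x - 2 ^ E with hr
      have hrlt : r < 2 ^ E := by omega
      have hxeq : x = 2 ^ E * 1 + r := by omega
      have hcomplt : 2 ^ E - 1 - r < 2 ^ E := by omega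
      have hyeq : 2 ^ (E + 1) - 1 - x = 2 ^ E * 0 + (2 ^ E - 1 - r) := by omega
      apply Nat.zero_of_testBit_eq_false
      intro i
      rw [Nat.testBit_and, hyeq, hxeq, Nat.testBit_two_pow_mul_add _ hrlt,
        Nat.testBit_two_pow_mul_add _ hcomplt]
      by_cases hi : i < E
      · simp only [if_pos hi]
        have := congrArg (fun t => t.testBit i) (ih r hrlt)
        simpa [Nat.testBit_and] using this
      · simp only [if_neg hi]
        simp [Nat.zero_testBit]

/-- addend has bits inside a disjoint sum: `y ⊆ x + y`. -/
lemma and_add_self' {x y : ℕ} (h : x &&& y = 0) : y &&& (x + y) = y := by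
  rw [Nat.add_comm]
  exact and_add_self (by rwa [Nat.land_comm])

/-- `2^E + β` is disjoint from `c` if `β` is, for small `β, c`. -/
lemma pow_add_disj {E β c : ℕ} (hβ : β < 2 ^ E) (hc : c < 2 ^ E) (h : β &&& c = 0) :
    (2 ^ E + β) &&& c = 0 := by
  apply Nat.zero_of_testBit_eq_false
  intro i
  rw [show 2 ^ E + β = 2 ^ E * 1 + β by omega, Nat.testBit_and,
    Nat.testBit_two_pow_mul_add _ hβ]
  by_cases hi : i < E
  · simp only [if_pos hi]
    have := congrArg (fun t => t.testBit i) h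
    simpa [Nat.testBit_and] using this
  · simp only [if_neg hi]
    have : c < 2 ^ i := lt_of_lt_of_le hc (Nat.pow_le_pow_right (by norm_num) (by omega))
    simp [Nat.testBit_lt_two_pow this]


open Finset in
/-- From a family of numbers each `< 2^e` with sum at least `2^e`, one can carve out
bit-subsets summing to exactly `2^e`. `r` is what remains. -/
lemma exact_part {ι : Type*} [Fintype ι] [DecidableEq ι] :
    ∀ (e : ℕ) (f : ι → ℕ), (∀ i, f i < 2 ^ e) → 2 ^ e ≤ ∑ i, f i →
    ∃ r : ι → ℕ, (∀ i, r i &&& f i = r i) ∧ ∑ i, (f i - r i) = 2 ^ e := by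
  intro e
  induction e with
  | zero =>
    intro f hf hsum
    exfalso
    have : ∑ i, f i = 0 := Finset.sum_eq_zero fun i _ => by have := hf i; omega
    omega
  | succ e ih =>
    intro f hf hsum
    have hEpos : 0 < 2 ^ e := Nat.pow_pos (by norm_num)
    have hE1 : (2:ℕ) ^ (e + 1) = 2 ^ e * 2 := pow_succ 2 e
    set A : Finset ι := Finset.univ.filter (fun i => 2 ^ e ≤ f i) with hA
    rcases lt_or_ge 1 A.card with hcard | hcard
    · -- two indices with high bit set
      obtain ⟨i, hi, j, hj, hij⟩ := Finset.one_lt_card.mp hcard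
      have hfi : 2 ^ e ≤ f i := (Finset.mem_filter.mp hi).2
      have hfj : 2 ^ e ≤ f j := (Finset.mem_filter.mp hj).2
      refine ⟨fun l => if l = i ∨ l = j then f l % 2 ^ e else f l, fun l => ?_, ?_⟩
      · by_cases hl : l = i ∨ l = j
        · simp only [if_pos hl]; exact mod_and_self _ _
        · simp only [if_neg hl, Nat.and_self]
      · have hzero : ∀ l ∈ Finset.univ \ ({i, j} : Finset ι),
            (f l - if l = i ∨ l = j then f l % 2 ^ e else f l) = 0 := by
          intro l hl
          simp only [Finset.mem_sdiff, Finset.mem_insert, Finset.mem_singleton] at hl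
          have : ¬(l = i ∨ l = j) := by tauto
          simp [this]
        rw [← Finset.sum_subset (Finset.subset_univ ({i, j} : Finset ι))
          (fun l _ hl => by
            apply hzero
            simp only [Finset.mem_sdiff]
            exact ⟨Finset.mem_univ l, hl⟩)]
        rw [Finset.sum_pair hij]
        have h1 : f i % 2 ^ e = f i - 2 ^ e := by
          have : f i < 2 ^ e * 2 := lt_of_lt_of_le (hf i) (le_of_eq hE1)
          rw [Nat.mod_eq_sub_mod hfi, Nat.mod_eq_of_lt (by omega)]
        have h2 : f j % 2 ^ e = f j - 2 ^ e := by
          have : f j < 2 ^ e * 2 := lt_of_lt_of_le (hf j) (le_of_eq hE1)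
          rw [Nat.mod_eq_sub_mod hfj, Nat.mod_eq_of_lt (by omega)]
        have e1 : (fun l => if l = i ∨ l = j then f l % 2 ^ e else f l) i = f i - 2 ^ e := by
          simp [h1]
        have e2 : (fun l => if l = i ∨ l = j then f l % 2 ^ e else f l) j = f j - 2 ^ e := by
          simp [h2]
        rw [e1, e2]
        have := hf i; have := hf j
        omega
    · rcases Nat.eq_zero_or_pos A.card with hc0 | hc1
      · -- no high bits: all f i < 2^e, sum ≥ 2^{e+1} ≥ 2·2^e : apply ih twice
        have hflt : ∀ i, f i < 2 ^ e := by
          intro i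
          by_contra hge
          have : i ∈ A := Finset.mem_filter.mpr ⟨Finset.mem_univ i, by omega⟩
          rw [Finset.card_eq_zero.mp hc0] at this
          exact absurd this (Finset.notMem_empty i)
        obtain ⟨r1, hr1sub, hr1sum⟩ := ih f hflt (by omega)
        have hr1le : ∀ i, r1 i ≤ f i := fun i => subset_le (hr1sub i)
        have hsum1 : ∑ i, r1 i + 2 ^ e = ∑ i, f i := by
          rw [← hr1sum, ← Finset.sum_add_distrib]
          exact Finset.sum_congr rfl fun i _ => by have := hr1le i; omega
        have hr1lt : ∀ i, r1 i < 2 ^ e := fun i => lt_of_le_of_lt (hr1le i) (hflt i)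
        obtain ⟨r2, hr2sub, hr2sum⟩ := ih r1 hr1lt (by omega)
        have hr2le : ∀ i, r2 i ≤ r1 i := fun i => subset_le (hr2sub i)
        refine ⟨r2, fun i => subset_trans (hr2sub i) (hr1sub i), ?_⟩
        have : ∀ i, f i - r2 i = (f i - r1 i) + (r1 i - r2 i) := by
          intro i; have := hr1le i; have := hr2le i; omega
        rw [Finset.sum_congr rfl fun i _ => this i, Finset.sum_add_distrib, hr1sum, hr2sum]
        omega
      · -- exactly one high index i0
        obtain ⟨i0, hi0⟩ := Finset.card_eq_one.mp (le_antisymm hcard hc1)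
        have hfi0 : 2 ^ e ≤ f i0 := by
          have : i0 ∈ A := by rw [hi0]; exact Finset.mem_singleton_self i0
          exact (Finset.mem_filter.mp this).2
        have hflt : ∀ i, i ≠ i0 → f i < 2 ^ e := by
          intro i hi
          by_contra hge
          have : i ∈ A := Finset.mem_filter.mpr ⟨Finset.mem_univ i, by omega⟩
          rw [hi0, Finset.mem_singleton] at this
          exact hi this
        set g : ι → ℕ := fun i => f i % 2 ^ e with hg
        have hglt : ∀ i, g i < 2 ^ e := fun i => Nat.mod_lt _ hEpos
        have hgi0 : g i0 = f i0 - 2 ^ e := by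
          have : f i0 < 2 ^ e * 2 := lt_of_lt_of_le (hf i0) (le_of_eq hE1)
          rw [hg]
          simp only
          rw [Nat.mod_eq_sub_mod hfi0, Nat.mod_eq_of_lt (by omega)]
        have hgeq : ∀ i, i ≠ i0 → g i = f i := by
          intro i hi
          rw [hg]; simp only; rw [Nat.mod_eq_of_lt (hflt i hi)]
        have hsumg : ∑ i, g i + 2 ^ e = ∑ i, f i := by
          rw [← Finset.add_sum_erase _ g (Finset.mem_univ i0),
            ← Finset.add_sum_erase _ f (Finset.mem_univ i0)]
          have : ∑ i ∈ Finset.univ.erase i0, g i = ∑ i ∈ Finset.univ.erase i0, f i :=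
            Finset.sum_congr rfl fun i hi => hgeq i (Finset.ne_of_mem_erase hi)
          omega
        obtain ⟨r, hrsub, hrsum⟩ := ih g hglt (by omega)
        have hrle : ∀ i, r i ≤ g i := fun i => subset_le (hrsub i)
        have hgsubf : ∀ i, g i &&& f i = g i := fun i => mod_and_self _ _
        refine ⟨r, fun i => subset_trans (hrsub i) (hgsubf i), ?_⟩
        have hsplit : ∀ i, f i - r i = (g i - r i) + (f i - g i) := by
          intro i
          have hle : g i ≤ f i := Nat.mod_le _ _
          have := hrle i; omega
        rw [Finset.sum_congr rfl fun i _ => hsplit i, Finset.sum_add_distrib, hrsum]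
        have : ∑ i, (f i - g i) = 2 ^ e := by
          have hz : ∀ i, i ≠ i0 → f i - g i = 0 := fun i hi => by rw [hgeq i hi]; omega
          rw [← Finset.add_sum_erase _ (fun i => f i - g i) (Finset.mem_univ i0)]
          have : ∑ i ∈ Finset.univ.erase i0, (f i - g i) = 0 :=
            Finset.sum_eq_zero fun i hi => hz i (Finset.ne_of_mem_erase hi)
          rw [this, hgi0]
          omega
        omega

/-- Kummer's criterion mod 2: `choose (b+c) b` is odd iff `b` and `c` have no common bits. -/
lemma kummer : ∀ n b c : ℕ, b + c = n → (Nat.choose n b % 2 = 1 ↔ b &&& c = 0) := by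
  intro n
  induction n using Nat.strong_induction_on with
  | _ n ih =>
    intro b c hbc
    rcases Nat.eq_zero_or_pos n with hn0 | hn0
    · subst hn0
      have hb : b = 0 := by omega
      have hc : c = 0 := by omega
      subst hb; subst hc
      simp
    have hluc := @Choose.choose_modEq_choose_mod_mul_choose_div_nat n b 2 ⟨Nat.prime_two⟩
    unfold Nat.ModEq at hluc
    by_cases hodd : b % 2 = 1 ∧ c % 2 = 1
    · -- both odd: choose is even and the numbers share bit 0
      have hn2 : n % 2 = 0 := by omega
      have hb2 : b % 2 = 1 := hodd.1
      rw [hn2, hb2] at hluc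
      simp [Nat.choose_eq_zero_of_lt] at hluc
      constructor
      · intro h; omega
      · intro h
        exfalso
        exact bit_disj h 0 (by simp [Nat.testBit_zero, hodd.1, hodd.2])
    · have hdivs : n / 2 = b / 2 + c / 2 := by omega
      have hch1 : Nat.choose (n % 2) (b % 2) = 1 := by
        have hb2 := Nat.mod_two_eq_zero_or_one b
        have hc2 := Nat.mod_two_eq_zero_or_one c
        have hn2 : n % 2 = b % 2 + c % 2 := by omega
        rcases hb2 with h1 | h1 <;> rcases hc2 with h2 | h2 <;>
          simp_all <;> omega
      rw [hch1, one_mul] at hluc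
      have hlt : b / 2 + c / 2 < n := by omega
      have ihh := ih (b / 2 + c / 2) hlt (b / 2) (c / 2) rfl
      have hdiv_and : (b &&& c) / 2 = (b / 2) &&& (c / 2) := by
        apply Nat.eq_of_testBit_eq
        intro i
        simp [Nat.testBit_div_two, Nat.testBit_and]
      have hkey : (b &&& c) % 2 = (b % 2) &&& (c % 2) := by
        rw [← Nat.and_one_is_mod, ← Nat.and_one_is_mod, ← Nat.and_one_is_mod]
        apply Nat.eq_of_testBit_eq
        intro i
        simp only [Nat.testBit_and]
        cases b.testBit i <;> cases c.testBit i <;> cases (1 : ℕ).testBit i <;> rfl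
      have hmod_and : (b &&& c) % 2 = 0 := by
        rcases Nat.mod_two_eq_zero_or_one b with h1 | h1 <;>
          rcases Nat.mod_two_eq_zero_or_one c with h2 | h2
        · rw [hkey, h1, h2]; rfl
        · rw [hkey, h1, h2]; rfl
        · rw [hkey, h1, h2]; rfl
        · exact absurd ⟨h1, h2⟩ hodd
      constructor
      · intro h
        have h1 : (n / 2).choose (b / 2) % 2 = 1 := by omega
        rw [hdivs] at h1
        have h2 := ihh.mp h1
        rw [← hdiv_and] at h2
        omega
      · intro h
        have hh : (b / 2) &&& (c / 2) = 0 := by rw [← hdiv_and, h]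
        have h2 := ihh.mpr hh
        rw [← hdivs] at h2
        omega

open MvPolynomial Finset

variable {m : ℕ}

/-- the exponent multi-index `x_1^{b_1} ⋯ x_m^{b_m} x_{m+1}^{Σ(a_i - b_i)}` -/
noncomputable def Mex (a b : Fin m → ℕ) : Fin (m + 1) →₀ ℕ :=
  (∑ i : Fin m, Finsupp.single i.castSucc (b i)) +
    Finsupp.single (Fin.last m) (∑ i, (a i - b i))

lemma Mex_castSucc (a b : Fin m → ℕ) (j : Fin m) : Mex a b j.castSucc = b j := by
  classical
  rw [Mex, Finsupp.add_apply, Finsupp.finset_sum_apply]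
  have h1 : Finsupp.single (Fin.last m) (∑ i, (a i - b i)) j.castSucc = 0 := by
    rw [Finsupp.single_apply, if_neg (Fin.castSucc_lt_last j).ne']
  rw [h1, add_zero]
  have h2 : ∀ i : Fin m, Finsupp.single i.castSucc (b i) j.castSucc
      = if i = j then b i else 0 := by
    intro i
    rw [Finsupp.single_apply]
    congr 1
    simp [Fin.castSucc_inj]
  rw [Finset.sum_congr rfl fun i _ => h2 i, Finset.sum_ite_eq' Finset.univ j b,
    if_pos (Finset.mem_univ j)]

lemma Mex_last (a b : Fin m → ℕ) : Mex a b (Fin.last m) = ∑ i, (a i - b i) := by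
  classical
  rw [Mex, Finsupp.add_apply, Finsupp.finset_sum_apply]
  have h1 : ∀ i : Fin m, Finsupp.single i.castSucc (b i) (Fin.last m) = 0 := by
    intro i
    rw [Finsupp.single_apply, if_neg (Fin.castSucc_lt_last i).ne]
  rw [Finset.sum_congr rfl fun i _ => h1 i, Finset.sum_const_zero, zero_add,
    Finsupp.single_apply, if_pos rfl]

lemma prod_monomial' {ι : Type*} (s : Finset ι) (f : ι → (Fin (m + 1) →₀ ℕ))
    (c : ι → ZMod 2) :
    (∏ i ∈ s, (monomial (f i) (c i) : MvPolynomial (Fin (m + 1)) (ZMod 2)))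
      = monomial (∑ i ∈ s, f i) (∏ i ∈ s, c i) := by
  classical
  induction s using Finset.cons_induction with
  | empty => simp [MvPolynomial.monomial_zero']
  | cons a s ha ih =>
    rw [Finset.prod_cons, ih, MvPolynomial.monomial_mul, Finset.sum_cons, Finset.prod_cons]

/-- the binomial expansion of the product -/
lemma F_eq (n : ℕ) (a : Fin m → ℕ) :
    (∏ i : Fin m, (X i.castSucc + X (Fin.last m) : MvPolynomial (Fin (m + 1)) (ZMod 2)) ^ a i)
      = ∑ b ∈ Fintype.piFinset (fun i : Fin m => Finset.range (a i + 1)),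
          monomial (Mex a b) (∏ i, (Nat.choose (a i) (b i) : ZMod 2)) := by
  classical
  have hfac : ∀ i : Fin m,
      (X i.castSucc + X (Fin.last m) : MvPolynomial (Fin (m + 1)) (ZMod 2)) ^ a i
        = ∑ j ∈ Finset.range (a i + 1),
            monomial (Finsupp.single i.castSucc j + Finsupp.single (Fin.last m) (a i - j))
              ((Nat.choose (a i) j : ZMod 2)) := by
    intro i
    rw [add_pow]
    apply Finset.sum_congr rfl
    intro j hj
    rw [MvPolynomial.X_pow_eq_monomial, MvPolynomial.X_pow_eq_monomial,
      MvPolynomial.monomial_mul, one_mul]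
    have hc : ((Nat.choose (a i) j : ℕ) : MvPolynomial (Fin (m + 1)) (ZMod 2))
        = MvPolynomial.C ((Nat.choose (a i) j : ZMod 2)) :=
      (map_natCast (MvPolynomial.C : ZMod 2 →+* MvPolynomial (Fin (m + 1)) (ZMod 2)) _).symm
    rw [hc, MvPolynomial.C_apply, MvPolynomial.monomial_mul, add_zero, one_mul]
  rw [Finset.prod_congr rfl fun i _ => hfac i, Finset.prod_univ_sum]
  apply Finset.sum_congr rfl
  intro b _
  rw [prod_monomial']
  congr 1
  rw [Mex, Finset.sum_add_distrib, ← Finsupp.single_finset_sum]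

lemma Mex_inj (a : Fin m → ℕ) {b b' : Fin m → ℕ} (h : Mex a b = Mex a b') : b = b' := by
  funext j
  have := congrArg (fun f => f j.castSucc) h
  simpa [Mex_castSucc] using this

lemma coeff_F (n : ℕ) (a b : Fin m → ℕ) (hb : ∀ i, b i ≤ a i) :
    MvPolynomial.coeff (Mex a b)
      (∏ i : Fin m, (X i.castSucc + X (Fin.last m) : MvPolynomial (Fin (m + 1)) (ZMod 2)) ^ a i)
      = ∏ i, (Nat.choose (a i) (b i) : ZMod 2) := by
  classical
  rw [F_eq n a, MvPolynomial.coeff_sum]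
  have hmem : b ∈ Fintype.piFinset (fun i : Fin m => Finset.range (a i + 1)) :=
    Fintype.mem_piFinset.mpr fun i => Finset.mem_range.mpr (by have := hb i; omega)
  rw [Finset.sum_eq_single b
    (fun b' _ hne => by
      rw [MvPolynomial.coeff_monomial, if_neg (fun hc => hne (Mex_inj a hc))])
    (fun habs => absurd hmem habs)]
  rw [MvPolynomial.coeff_monomial, if_pos rfl]

/-- main characterization of non-vanishing in the quotient ring -/
lemma mk_ne_zero_iff (n : ℕ) (a : Fin m → ℕ) :
    (Ideal.Quotient.mk
      (Ideal.span (Set.range fun i : Fin (m + 1) =>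
        (X i : MvPolynomial (Fin (m + 1)) (ZMod 2)) ^ (n + 1)))
      (∏ i : Fin m, (X i.castSucc + X (Fin.last m)) ^ a i) ≠ 0)
    ↔ ∃ b : Fin m → ℕ, (∀ i, b i ≤ a i) ∧ (∀ i, Nat.choose (a i) (b i) % 2 = 1) ∧
        (∀ i, b i ≤ n) ∧ (∑ i, (a i - b i)) ≤ n := by
  classical
  rw [Ne, Ideal.Quotient.eq_zero_iff_mem]
  have hspan : (Set.range fun i : Fin (m + 1) =>
      (X i : MvPolynomial (Fin (m + 1)) (ZMod 2)) ^ (n + 1))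
      = (fun s => monomial s (1 : ZMod 2)) ''
          (Set.range fun i : Fin (m + 1) => Finsupp.single i (n + 1)) := by
    have hfun : (fun i : Fin (m + 1) =>
        (X i : MvPolynomial (Fin (m + 1)) (ZMod 2)) ^ (n + 1))
        = ((fun s => monomial s (1 : ZMod 2)) ∘ fun i : Fin (m + 1) =>
            Finsupp.single i (n + 1)) := by
      funext i
      simp [Function.comp, MvPolynomial.X_pow_eq_monomial]
    rw [hfun, Set.range_comp]
  rw [hspan, MvPolynomial.mem_ideal_span_monomial_image]
  constructor
  · -- non-membership → existence of a good monomial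
    intro hnot
    push_neg at hnot
    obtain ⟨μ, hμsupp, hμ⟩ := hnot
    have hcoeff : MvPolynomial.coeff μ
        (∏ i : Fin m, (X i.castSucc + X (Fin.last m)
          : MvPolynomial (Fin (m + 1)) (ZMod 2)) ^ a i) ≠ 0 :=
      MvPolynomial.mem_support_iff.mp hμsupp
    rw [F_eq n a, MvPolynomial.coeff_sum] at hcoeff
    obtain ⟨b, hbmem, hbne⟩ := Finset.exists_ne_zero_of_sum_ne_zero hcoeff
    rw [MvPolynomial.coeff_monomial] at hbne
    have hMex : Mex a b = μ := by
      by_contra hc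
      rw [if_neg hc] at hbne
      exact hbne rfl
    rw [if_pos hMex] at hbne
    have hble : ∀ i, b i ≤ a i := fun i => by
      have := Fintype.mem_piFinset.mp hbmem i
      rw [Finset.mem_range] at this
      omega
    refine ⟨b, hble, ?_, ?_, ?_⟩
    · intro i
      have hne : ((Nat.choose (a i) (b i) : ZMod 2)) ≠ 0 := by
        intro h0
        exact hbne (Finset.prod_eq_zero (Finset.mem_univ i) h0)
      rw [Ne, ZMod.natCast_eq_zero_iff] at hne
      omega
    · intro i
      have := hμ (Finsupp.single i.castSucc (n + 1)) ⟨i.castSucc, rfl⟩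
      rw [Finsupp.single_le_iff] at this
      rw [← hMex, Mex_castSucc] at this
      omega
    · have := hμ (Finsupp.single (Fin.last m) (n + 1)) ⟨Fin.last m, rfl⟩
      rw [Finsupp.single_le_iff] at this
      rw [← hMex, Mex_last] at this
      omega
  · -- existence of a good monomial → non-membership
    rintro ⟨b, hble, hodd, hbn, hsum⟩ hmem
    have hcoeff : MvPolynomial.coeff (Mex a b)
        (∏ i : Fin m, (X i.castSucc + X (Fin.last m)
          : MvPolynomial (Fin (m + 1)) (ZMod 2)) ^ a i) ≠ 0 := by
      rw [coeff_F n a b hble]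
      apply Finset.prod_ne_zero_iff.mpr
      intro i _
      rw [Ne, ZMod.natCast_eq_zero_iff]
      have := hodd i
      omega
    obtain ⟨s, hs, hsle⟩ := hmem (Mex a b) (MvPolynomial.mem_support_iff.mpr hcoeff)
    obtain ⟨i, rfl⟩ := hs
    rcases Fin.eq_castSucc_or_eq_last i with ⟨j, rfl⟩ | rfl
    · rw [Finsupp.single_le_iff, Mex_castSucc] at hsle
      have := hbn j
      omega
    · rw [Finsupp.single_le_iff, Mex_last] at hsle
      omega

/-- the combinatorial description of the zcl set -/
def SS (m n : ℕ) : Set ℕ :=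
  {s | ∃ b c : Fin m → ℕ, (∀ i, b i &&& c i = 0) ∧ (∀ i, b i ≤ n) ∧
    (∑ i, c i) ≤ n ∧ s = ∑ i, (b i + c i)}

lemma SS_nonempty (m n : ℕ) : (SS m n).Nonempty :=
  ⟨0, 0, 0, fun _ => by simp, fun _ => Nat.zero_le n, by simp, by simp⟩

lemma SS_le_bound (m n : ℕ) {s : ℕ} (hs : s ∈ SS m n) : s ≤ m * n + n := by
  obtain ⟨b, c, _, hble, hcsum, rfl⟩ := hs
  rw [Finset.sum_add_distrib]
  have h1 : ∑ i, b i ≤ m * n := by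
    calc ∑ i, b i ≤ ∑ _i : Fin m, n := Finset.sum_le_sum fun i _ => hble i
    _ = m * n := by simp [Finset.sum_const, mul_comm]
  omega

lemma SS_bdd (m n : ℕ) : BddAbove (SS m n) :=
  ⟨m * n + n, fun _ hs => SS_le_bound m n hs⟩

lemma sum_le_card_mul {m v : ℕ} (g : Fin m → ℕ) (h : ∀ i, g i ≤ v) :
    ∑ i, g i ≤ m * v := by
  calc ∑ i, g i ≤ ∑ _i : Fin m, v := Finset.sum_le_sum fun i _ => h i
  _ = m * v := by simp [Finset.sum_const, mul_comm]

/-- The main combinatorial recursion. -/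
lemma SS_sup_rec (m e d : ℕ) (hd : d < 2 ^ e) :
    sSup (SS m (2 ^ e + d)) = min (sSup (SS m d) + (m + 1) * 2 ^ e)
      (m * (2 ^ (e + 1) - 1)) := by
  have hEpos : 0 < 2 ^ e := Nat.pow_pos (by norm_num)
  have hE1 : (2:ℕ) ^ (e + 1) = 2 ^ e * 2 := pow_succ 2 e
  set n := 2 ^ e + d with hn
  set Z := sSup (SS m d) with hZ
  have hZd : Z ≤ m * d + d := csSup_le (SS_nonempty m d) fun s hs => SS_le_bound m d hs
  apply le_antisymm
  · -- upper bound
    apply csSup_le (SS_nonempty m n)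
    rintro s ⟨b, c, hdisj, hble, hcsum, rfl⟩
    have hblt : ∀ i, b i < 2 ^ (e + 1) := fun i => by have := hble i; omega
    have hclt' : ∀ i, c i ≤ ∑ l, c l := fun i =>
      Finset.single_le_sum (fun l _ => Nat.zero_le (c l)) (Finset.mem_univ i)
    apply le_min
    · -- ≤ Z + (m+1)·2^e
      set β' : Fin m → ℕ := fun i => if 2 ^ e ≤ b i then b i - 2 ^ e else 0 with hβ'
      have hβ'sub : ∀ i, β' i &&& b i = β' i := by
        intro i
        rw [hβ']
        by_cases h : 2 ^ e ≤ b i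
        · simp only [if_pos h]
          have hlt : b i - 2 ^ e < 2 ^ e := by have := hblt i; omega
          have : b i - 2 ^ e = b i % 2 ^ e := by
            rw [Nat.mod_eq_sub_mod h, Nat.mod_eq_of_lt hlt]
          rw [this]
          exact mod_and_self _ _
        · simp only [if_neg h]
          simp
      have hβ'd : ∀ i, β' i ≤ d := by
        intro i
        rw [hβ']
        by_cases h : 2 ^ e ≤ b i
        · simp only [if_pos h]; have := hble i; omega
        · simp only [if_neg h]; omega
      have hble2 : ∀ i, b i ≤ β' i + 2 ^ e := by
        intro i
        rw [hβ']
        by_cases h : 2 ^ e ≤ b i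
        · simp only [if_pos h]; omega
        · simp only [if_neg h]; omega
      have hsumb : ∑ i, b i ≤ ∑ i, β' i + m * 2 ^ e := by
        calc ∑ i, b i ≤ ∑ i, (β' i + 2 ^ e) := Finset.sum_le_sum fun i _ => hble2 i
        _ = ∑ i, β' i + m * 2 ^ e := by
          rw [Finset.sum_add_distrib]
          simp [Finset.sum_const, mul_comm]
      have hm1 : (m + 1) * 2 ^ e = m * 2 ^ e + 2 ^ e := by ring
      by_cases hA : ∃ j, 2 ^ e ≤ c j
      · obtain ⟨j, hj⟩ := hA
        set γ : Fin m → ℕ := fun i => c i % 2 ^ e with hγ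
        have hγsub : ∀ i, γ i &&& c i = γ i := fun i => mod_and_self _ _
        have hdisj' : ∀ i, β' i &&& γ i = 0 := fun i =>
          disj_of_subsets (hβ'sub i) (hγsub i) (hdisj i)
        have hcj : c j < 2 ^ (e + 1) := by have := hclt' j; omega
        have hγj : γ j + 2 ^ e = c j := by
          rw [hγ]
          simp only
          rw [Nat.mod_eq_sub_mod hj, Nat.mod_eq_of_lt (by omega)]
          omega
        have hγeq : ∀ i, i ≠ j → γ i = c i := by
          intro i hij
          have hij' : ({i, j} : Finset (Fin m)) ⊆ Finset.univ := Finset.subset_univ _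
          have hpair : c i + c j ≤ ∑ l, c l := by
            rw [← Finset.sum_pair hij]
            exact Finset.sum_le_sum_of_subset hij'
          have : c i < 2 ^ e := by omega
          rw [hγ]
          simp only
          rw [Nat.mod_eq_of_lt this]
        have hsumc : ∑ i, c i = ∑ i, γ i + 2 ^ e := by
          rw [← Finset.add_sum_erase _ c (Finset.mem_univ j),
            ← Finset.add_sum_erase _ γ (Finset.mem_univ j)]
          have : ∑ i ∈ Finset.univ.erase j, γ i = ∑ i ∈ Finset.univ.erase j, c i :=
            Finset.sum_congr rfl fun i hi => hγeq i (Finset.ne_of_mem_erase hi)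
          omega
        have hγd : ∑ i, γ i ≤ d := by omega
        have hmem : (∑ i, (β' i + γ i)) ∈ SS m d := ⟨β', γ, hdisj', hβ'd, hγd, rfl⟩
        have hZle : ∑ i, (β' i + γ i) ≤ Z := le_csSup (SS_bdd m d) hmem
        rw [Finset.sum_add_distrib] at hZle ⊢
        omega
      · push_neg at hA
        rcases le_or_gt (2 ^ e) (∑ i, c i) with hge | hlt
        · obtain ⟨r, hrsub, hrsum⟩ := exact_part e c hA hge
          have hrle : ∀ i, r i ≤ c i := fun i => subset_le (hrsub i)
          have hrs : ∑ i, r i + 2 ^ e = ∑ i, c i := by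
            rw [← hrsum, ← Finset.sum_add_distrib]
            exact Finset.sum_congr rfl fun i _ => by have := hrle i; omega
          have hdisj' : ∀ i, β' i &&& r i = 0 := fun i =>
            disj_of_subsets (hβ'sub i) (hrsub i) (hdisj i)
          have hrd : ∑ i, r i ≤ d := by omega
          have hmem : (∑ i, (β' i + r i)) ∈ SS m d := ⟨β', r, hdisj', hβ'd, hrd, rfl⟩
          have hZle : ∑ i, (β' i + r i) ≤ Z := le_csSup (SS_bdd m d) hmem
          rw [Finset.sum_add_distrib] at hZle ⊢
          omega
        · have hmem : (∑ i, (β' i + (0 : Fin m → ℕ) i)) ∈ SS m d :=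
            ⟨β', 0, fun i => by simp, hβ'd, by simp, rfl⟩
          have hZle : ∑ i, (β' i + (0 : Fin m → ℕ) i) ≤ Z := le_csSup (SS_bdd m d) hmem
          simp only [Pi.zero_apply, add_zero] at hZle
          rw [Finset.sum_add_distrib]
          omega
    · -- ≤ m·(2^{e+1} - 1)
      have hidx : ∀ i, b i + c i ≤ 2 ^ (e + 1) - 1 := by
        intro i
        have h1 : b i < 2 ^ (e + 1) := hblt i
        have h2 : c i < 2 ^ (e + 1) := by have := hclt' i; omega
        have := disj_add_lt (hdisj i) h1 h2
        omega
      exact sum_le_card_mul _ hidx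
  · -- lower bound: the min is attained
    rcases le_total (m * (2 ^ (e + 1) - 1)) (Z + (m + 1) * 2 ^ e) with hcase | hcase
    · rw [min_eq_right hcase]
      apply le_csSup (SS_bdd m n)
      set c0 := 2 ^ (e + 1) - 1 - n with hc0
      have hc0eq : 2 ^ (e + 1) - 1 = 2 ^ e + c0 + d := by omega
      refine ⟨fun _ => n, fun _ => c0, fun i => compl_and (e + 1) n (by omega), fun i => le_rfl,
        ?_, ?_⟩
      · -- ∑ c0 = m * c0 ≤ n
        have h2 : m * (2 ^ (e + 1) - 1) = m * 2 ^ e + m * c0 + m * d := by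
          rw [hc0eq]; ring
        have h3 : (m + 1) * 2 ^ e = m * 2 ^ e + 2 ^ e := by ring
        have h4 : ∑ _i : Fin m, c0 = m * c0 := by simp [Finset.sum_const, mul_comm]
        rw [h4]
        omega
      · have h5 : ∀ _i : Fin m, n + c0 = 2 ^ (e + 1) - 1 := fun _ => by omega
        rw [Finset.sum_congr rfl fun i _ => h5 i]
        simp [Finset.sum_const, mul_comm]
    · rw [min_eq_left hcase]
      apply le_csSup (SS_bdd m n)
      obtain ⟨β, γ, hdisjd, hβd, hγsum, hZeq⟩ := Nat.sSup_mem (SS_nonempty m d) (SS_bdd m d)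
      rw [← hZ] at hZeq
      have hγle : ∀ i, γ i ≤ d := fun i =>
        le_trans (Finset.single_le_sum (fun l _ => Nat.zero_le (γ l)) (Finset.mem_univ i)) hγsum
      have hβγlt : ∀ i, β i + γ i < 2 ^ e := fun i =>
        disj_add_lt (hdisjd i) (by have := hβd i; omega) (by have := hγle i; omega)
      set f : Fin m → ℕ := fun i => 2 ^ e - 1 - (β i + γ i) with hf
      have hflt : ∀ i, f i < 2 ^ e := fun i => by rw [hf]; simp only; omega
      have hcompl : ∀ i, (β i + γ i) &&& f i = 0 := fun i => compl_and e _ (hβγlt i)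
      have hfβ : ∀ i, f i &&& β i = 0 := fun i =>
        disj_of_subsets (Nat.and_self (f i)) (and_add_self (hdisjd i))
          (by rw [Nat.land_comm]; exact hcompl i)
      have hfγ : ∀ i, f i &&& γ i = 0 := fun i =>
        disj_of_subsets (Nat.and_self (f i)) (and_add_self' (hdisjd i))
          (by rw [Nat.land_comm]; exact hcompl i)
      have hsumf : ∑ i, f i + Z = m * (2 ^ e - 1) := by
        have h1 : ∀ i : Fin m, f i + (β i + γ i) = 2 ^ e - 1 := fun i => by
          have := hβγlt i; rw [hf]; simp only; omega
        have h2 : ∑ i, (f i + (β i + γ i)) = m * (2 ^ e - 1) := by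
          rw [Finset.sum_congr rfl fun i _ => h1 i]
          simp [Finset.sum_const, mul_comm]
        rw [Finset.sum_add_distrib] at h2
        rw [hZeq]
        omega
      have hge : 2 ^ e ≤ ∑ i, f i := by
        have h2 : m * (2 ^ (e + 1) - 1) = m * (2 ^ e - 1) + m * 2 ^ e := by
          have : (2:ℕ) ^ (e + 1) - 1 = (2 ^ e - 1) + 2 ^ e := by omega
          rw [this]; ring
        have h3 : (m + 1) * 2 ^ e = m * 2 ^ e + 2 ^ e := by ring
        omega
      obtain ⟨r, hrsub, hrsum⟩ := exact_part e f hflt hge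
      set t : Fin m → ℕ := fun i => f i - r i with ht
      have htsub : ∀ i, t i &&& f i = t i := fun i => sub_subset (hrsub i)
      have htβ : ∀ i, t i &&& β i = 0 := fun i =>
        disj_of_subsets (htsub i) (Nat.and_self (β i)) (hfβ i)
      have htγ : ∀ i, t i &&& γ i = 0 := fun i =>
        disj_of_subsets (htsub i) (Nat.and_self (γ i)) (hfγ i)
      have hγt : ∀ i, γ i &&& t i = 0 := fun i => by rw [Nat.land_comm]; exact htγ i
      have htlt : ∀ i, t i < 2 ^ e := fun i => by
        have h1 : t i ≤ f i := by rw [ht]; simp only; omega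
        exact lt_of_le_of_lt h1 (hflt i)
      have hc'lt : ∀ i, γ i + t i < 2 ^ e := fun i =>
        disj_add_lt (hγt i) (by have := hγle i; omega) (htlt i)
      refine ⟨fun i => 2 ^ e + β i, fun i => γ i + t i, ?_, ?_, ?_, ?_⟩
      · intro i
        apply pow_add_disj (by have := hβd i; omega) (hc'lt i)
        have hγβ : γ i &&& β i = 0 := by rw [Nat.land_comm]; exact hdisjd i
        have := add_disj (hγt i) hγβ (htβ i)
        rwa [Nat.land_comm]
      · intro i
        show 2 ^ e + β i ≤ n
        have := hβd i; omega
      · rw [Finset.sum_add_distrib, hrsum]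
        omega
      · have h3 : (m + 1) * 2 ^ e = m * 2 ^ e + 2 ^ e := by ring
        have h4 : ∑ i : Fin m, (2 ^ e + β i + (γ i + t i))
            = m * 2 ^ e + (∑ i, (β i + γ i)) + ∑ i, t i := by
          rw [show (fun i : Fin m => 2 ^ e + β i + (γ i + t i))
              = fun i : Fin m => (2 ^ e + (β i + γ i)) + t i from funext fun i => by ring]
          rw [Finset.sum_add_distrib, Finset.sum_add_distrib]
          simp [Finset.sum_const, mul_comm]
        rw [h4, ← hZeq, hrsum]
        omega
end ZclAux

open MvPolynomial in
/-- `zcl k n` is the maximum of `a_1 + ... + a_(k-1)` over tuples of natural numbers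
such that the product of the `(x_i + x_k)^(a_i)` is nonzero in
`(Z/2)[x_1, ..., x_k] / (x_1^(n+1), ..., x_k^(n+1))`. (For `k ≥ 1` the ring has
`(k-1)+1 = k` variables, the last one playing the role of `x_k`.) -/
noncomputable def zcl (k n : ℕ) : ℕ :=
  sSup {s : ℕ | ∃ a : Fin (k - 1) → ℕ, s = ∑ i, a i ∧
    Ideal.Quotient.mk
      (Ideal.span (Set.range fun i : Fin (k - 1 + 1) =>
        (X i : MvPolynomial (Fin (k - 1 + 1)) (ZMod 2)) ^ (n + 1)))
      (∏ i : Fin (k - 1), (X i.castSucc + X (Fin.last (k - 1))) ^ a i) ≠ 0}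

open MvPolynomial in
lemma zcl_eq (k n : ℕ) : zcl k n = sSup (ZclAux.SS (k - 1) n) := by
  unfold zcl
  apply congrArg sSup
  apply Set.ext
  intro s
  simp only [Set.mem_setOf_eq, ZclAux.SS]
  constructor
  · rintro ⟨a, rfl, hne⟩
    obtain ⟨b, hble, hodd, hbn, hsum⟩ := (ZclAux.mk_ne_zero_iff n a).mp hne
    refine ⟨b, fun i => a i - b i, fun i => ?_, hbn, hsum, ?_⟩
    · exact (ZclAux.kummer (a i) (b i) (a i - b i) (show b i + (a i - b i) = a i by have := hble i; omega)).mp (hodd i)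
    · refine Finset.sum_congr rfl fun i _ => ?_
      show a i = b i + (a i - b i)
      have := hble i; omega
  · rintro ⟨b, c, hdisj, hbn, hcsum, rfl⟩
    refine ⟨fun i => b i + c i, rfl,
      (ZclAux.mk_ne_zero_iff n _).mpr ⟨b, fun i => by omega, fun i => ?_, hbn, ?_⟩⟩
    · exact (ZclAux.kummer (b i + c i) (b i) (c i) rfl).mpr (hdisj i)
    · have h : ∀ i : Fin (k - 1), (b i + c i) - b i = c i := fun i => by omega
      rw [Finset.sum_congr rfl fun i _ => h i]
      exact hcsum

/-- If `n = 2^e + d` with `0 ≤ d < 2^e` and `k ≥ 2`, then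
`zcl_k(n) = min(zcl_k(d) + k*2^e, (k-1)(2^(e+1) - 1))`. -/
theorem zcl_recursion (e d k : ℕ) (hd : d < 2 ^ e) (hk : 2 ≤ k) :
    zcl k (2 ^ e + d) = min (zcl k d + k * 2 ^ e) ((k - 1) * (2 ^ (e + 1) - 1)) := by
  have hk1 : k - 1 + 1 = k := by omega
  rw [zcl_eq, zcl_eq, ZclAux.SS_sup_rec (k - 1) e d hd, hk1]
end

section
/- Let n = 2^e + d with 0 ≤ d < 2^e, and let j ≥ 1. Then m_j(n) = min(m_j(d) + 2^e, j·(2^{e+1} − 1 − n)). -/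
/-- `Zms m` is the set of powers of 2 corresponding to the 0 digits in the binary
expansion of `m` (as a multiset; `Zms 0` is empty). -/
def Zms (m : ℕ) : Multiset ℕ :=
  if m = 0 then 0
  else ((Finset.range (Nat.log 2 m + 1)).filter fun j => ¬m.testBit j).val.map (2 ^ ·)

/-- `phi S n` is the maximal sum of a sub-multiset `T` of `S` subject to `T.sum ≤ n`. -/
noncomputable def phi (S : Multiset ℕ) (n : ℕ) : ℕ :=
  sSup {t : ℕ | ∃ T ≤ S, T.sum = t ∧ t ≤ n}

/-- `mfun j n = phi(Z(n)^j, n)` where `Z(n)^j` is the multiset union of `j` copies of `Z(n)`. -/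
noncomputable def mfun (j n : ℕ) : ℕ := phi (j • Zms n) n

/-! ### Auxiliary lemmas -/

lemma phi_bddAbove (S : Multiset ℕ) (n : ℕ) :
    BddAbove {t : ℕ | ∃ T ≤ S, T.sum = t ∧ t ≤ n} := by
  refine ⟨n, ?_⟩
  rintro t ⟨T, _, rfl, h⟩
  exact h

lemma phi_set_nonempty (S : Multiset ℕ) (n : ℕ) :
    {t : ℕ | ∃ T ≤ S, T.sum = t ∧ t ≤ n}.Nonempty :=
  ⟨0, 0, Multiset.zero_le _, rfl, Nat.zero_le n⟩

/-- The sup in `phi` is attained. -/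
lemma phi_spec (S : Multiset ℕ) (n : ℕ) :
    ∃ T ≤ S, T.sum = phi S n ∧ phi S n ≤ n := by
  have := Nat.sSup_mem (phi_set_nonempty S n) (phi_bddAbove S n)
  exact this

lemma le_phi {S : Multiset ℕ} {n : ℕ} {T : Multiset ℕ} (hT : T ≤ S) (hs : T.sum ≤ n) :
    T.sum ≤ phi S n :=
  le_csSup (phi_bddAbove S n) ⟨T, hT, rfl, hs⟩

lemma phi_le {S : Multiset ℕ} {n x : ℕ} (h : ∀ T ≤ S, T.sum ≤ n → T.sum ≤ x) :
    phi S n ≤ x := by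
  apply csSup_le (phi_set_nonempty S n)
  rintro t ⟨T, hT, rfl, hn⟩
  exact h T hT hn

lemma sum_testBit (e : ℕ) :
    ∀ d : ℕ, (∑ i ∈ Finset.range e, (if d.testBit i then 2 ^ i else 0)) = d % 2 ^ e := by
  induction e with
  | zero => intro d; simp [Nat.mod_one]
  | succ e ih =>
    intro d
    rw [Finset.sum_range_succ, ih d, pow_succ, Nat.mod_mul]
    congr 1
    rw [Nat.testBit_eq_decide_div_mod_eq]
    rcases Nat.mod_two_eq_zero_or_one (d / 2 ^ e) with h | h <;> simp [h]

lemma sum_range_two_pow (e : ℕ) : (∑ i ∈ Finset.range e, 2 ^ i) = 2 ^ e - 1 := by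
  induction e with
  | zero => simp
  | succ e ih =>
    rw [Finset.sum_range_succ, ih, pow_succ]
    have : 1 ≤ 2 ^ e := Nat.one_le_two_pow
    omega

lemma Zms_pow_add (e d : ℕ) (hd : d < 2 ^ e) :
    Zms (2 ^ e + d) = ((Finset.range e).filter fun i => ¬d.testBit i).val.map (2 ^ ·) := by
  have h1 : 1 ≤ 2 ^ e := Nat.one_le_two_pow
  have hne : 2 ^ e + d ≠ 0 := by omega
  have hlog : Nat.log 2 (2 ^ e + d) = e := by
    apply Nat.log_eq_of_pow_le_of_lt_pow (by omega)
    rw [pow_succ]; omega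
  rw [Zms, if_neg hne, hlog]
  congr 2
  apply Finset.ext
  intro i
  simp only [Finset.mem_filter, Finset.mem_range]
  constructor
  · rintro ⟨hi, hbit⟩
    rcases lt_trichotomy i e with h | rfl | h
    · exact ⟨h, by rwa [Nat.testBit_two_pow_add_gt h] at hbit⟩
    · exfalso
      apply hbit
      rw [Nat.testBit_two_pow_add_eq, Nat.testBit_lt_two_pow hd]
      rfl
    · omega
  · rintro ⟨hi, hbit⟩
    exact ⟨by omega, by rwa [Nat.testBit_two_pow_add_gt hi]⟩

lemma mem_Zms_pow_add {e d x : ℕ} (hd : d < 2 ^ e) :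
    x ∈ Zms (2 ^ e + d) ↔ ∃ i, i < e ∧ ¬d.testBit i ∧ x = 2 ^ i := by
  rw [Zms_pow_add e d hd]
  simp only [Multiset.mem_map, ← Finset.mem_def, Finset.mem_filter, Finset.mem_range]
  constructor
  · rintro ⟨i, ⟨hi, hbit⟩, rfl⟩
    exact ⟨i, hi, hbit, rfl⟩
  · rintro ⟨i, hi, hbit, rfl⟩
    exact ⟨i, ⟨hi, hbit⟩, rfl⟩

lemma Zms_pow_add_sum (e d : ℕ) (hd : d < 2 ^ e) :
    (Zms (2 ^ e + d)).sum = 2 ^ e - 1 - d := by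
  rw [Zms_pow_add e d hd]
  have : ((((Finset.range e).filter fun i => ¬d.testBit i)).val.map (2 ^ ·)).sum
      = ∑ i ∈ (Finset.range e).filter fun i => ¬d.testBit i, 2 ^ i := rfl
  rw [this, Finset.sum_filter]
  have key : (∑ i ∈ Finset.range e, (if ¬d.testBit i then 2 ^ i else 0))
      + (∑ i ∈ Finset.range e, (if d.testBit i then 2 ^ i else 0))
      = ∑ i ∈ Finset.range e, 2 ^ i := by
    rw [← Finset.sum_add_distrib]
    apply Finset.sum_congr rfl
    intro i _
    by_cases h : d.testBit i <;> simp [h]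
  rw [sum_testBit, Nat.mod_eq_of_lt hd, sum_range_two_pow] at key
  omega

lemma Zms_nodup (m : ℕ) : (Zms m).Nodup := by
  rw [Zms]
  split
  · exact Multiset.nodup_zero
  · apply Multiset.Nodup.map
    · exact Nat.pow_right_injective le_rfl
    · exact (Finset.filter _ _).nodup

lemma Zms_le_Zms_pow_add (e d : ℕ) (hd : d < 2 ^ e) :
    Zms d ≤ Zms (2 ^ e + d) := by
  by_cases h0 : d = 0
  · subst h0; rw [Zms]; simp
  rw [Zms, if_neg h0, Zms_pow_add e d hd]
  apply Multiset.map_le_map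
  rw [Finset.val_le_iff]
  intro i hi
  simp only [Finset.mem_filter, Finset.mem_range] at hi ⊢
  have hlog : Nat.log 2 d < e := by
    exact Nat.log_lt_of_lt_pow h0 hd
  exact ⟨by omega, hi.2⟩

/-- From a multiset of divisors of `2^E` with sum at least `2^E`, one can extract a
sub-multiset with sum exactly `2^E`. -/
lemma extract_pow (E : ℕ) : ∀ T : Multiset ℕ, (∀ x ∈ T, x ∣ 2 ^ E) → 2 ^ E ≤ T.sum →
    ∃ U ≤ T, U.sum = 2 ^ E := by
  induction E with
  | zero =>
    intro T hdvd hsum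
    simp only [pow_zero] at hdvd hsum ⊢
    have hT : T ≠ 0 := by
      intro h; rw [h] at hsum; simp at hsum
    obtain ⟨x, hx⟩ := Multiset.exists_mem_of_ne_zero hT
    have hx1 : x = 1 := Nat.dvd_one.mp (hdvd x hx)
    exact ⟨{x}, Multiset.singleton_le.mpr hx, by simp [hx1]⟩
  | succ E ih =>
    intro T hdvd hsum
    by_cases hmem : (2 ^ (E + 1) : ℕ) ∈ T
    · exact ⟨{2 ^ (E + 1)}, Multiset.singleton_le.mpr hmem, by simp⟩
    · have hdvd' : ∀ x ∈ T, x ∣ 2 ^ E := by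
        intro x hx
        obtain ⟨k, hk, rfl⟩ := (Nat.dvd_prime_pow Nat.prime_two).mp (hdvd x hx)
        have hkne : k ≠ E + 1 := fun h => hmem (h ▸ hx)
        exact pow_dvd_pow 2 (by omega)
      have hEE : (2 ^ E : ℕ) + 2 ^ E ≤ T.sum := by
        rw [← two_mul, ← pow_succ']; exact hsum
      obtain ⟨U1, hU1le, hU1sum⟩ := ih T hdvd' (by omega)
      have hcancel : T - U1 + U1 = T := tsub_add_cancel_of_le hU1le
      have hsum' : (T - U1).sum + U1.sum = T.sum := by
        rw [← Multiset.sum_add, hcancel]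
      obtain ⟨U2, hU2le, hU2sum⟩ := ih (T - U1)
        (fun x hx => hdvd' x (Multiset.mem_of_le (tsub_le_self) hx))
        (by omega)
      refine ⟨U1 + U2, ?_, by rw [Multiset.sum_add, hU1sum, hU2sum, pow_succ]; ring⟩
      rw [Multiset.le_iff_count]
      intro a
      have h1 := Multiset.le_iff_count.mp hU1le a
      have h2 := Multiset.le_iff_count.mp hU2le a
      rw [Multiset.count_sub] at h2
      rw [Multiset.count_add]
      omega

/-- Adding a sub-multiset of `T - V` to `V ≤ T` stays below `T`. -/
lemma add_le_of_le_sub {T V U : Multiset ℕ} (hV : V ≤ T) (hU : U ≤ T - V) : V + U ≤ T := by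
  rw [Multiset.le_iff_count]
  intro a
  have h1 := Multiset.le_iff_count.mp hV a
  have h2 := Multiset.le_iff_count.mp hU a
  rw [Multiset.count_sub] at h2
  rw [Multiset.count_add]
  omega

lemma sum_nsmul' (j : ℕ) (S : Multiset ℕ) : (j • S).sum = j * S.sum := by
  induction j with
  | zero => simp
  | succ j ih => rw [succ_nsmul, Multiset.sum_add, ih]; ring

/-- If `n = 2^e + d` with `0 ≤ d < 2^e` and `j ≥ 1`, then
`m_j(n) = min(m_j(d) + 2^e, j*(2^(e+1) - 1 - n))`. -/
theorem mfun_recursion (e d j : ℕ) (hd : d < 2 ^ e) (hj : 1 ≤ j) :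
    mfun j (2 ^ e + d) =
      min (mfun j d + 2 ^ e) (j * (2 ^ (e + 1) - 1 - (2 ^ e + d))) := by
  have h1 : 1 ≤ 2 ^ e := Nat.one_le_two_pow
  have hrhs : 2 ^ (e + 1) - 1 - (2 ^ e + d) = 2 ^ e - 1 - d := by
    rw [pow_succ]; omega
  rw [hrhs]
  set n := 2 ^ e + d with hn
  set A : Multiset ℕ := j • Zms n with hA
  have hAsum : A.sum = j * (2 ^ e - 1 - d) := by
    rw [hA, sum_nsmul', Zms_pow_add_sum e d hd]
  -- every element of A divides 2^e and is of the form 2^i with i < e, ¬ d.testBit i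
  have hmemA : ∀ x ∈ A, ∃ i, i < e ∧ ¬d.testBit i ∧ x = 2 ^ i := by
    intro x hx
    exact (mem_Zms_pow_add hd).mp (Multiset.mem_of_mem_nsmul hx)
  have hdvdA : ∀ x ∈ A, x ∣ 2 ^ e := by
    intro x hx
    obtain ⟨i, hi, _, rfl⟩ := hmemA x hx
    exact pow_dvd_pow 2 (le_of_lt hi)
  -- small elements of Zms n are in Zms d
  have hsmall : ∀ x, x ∈ Zms n → x ≤ d → x ∈ Zms d := by
    intro x hx hxd
    obtain ⟨i, hi, hbit, rfl⟩ := (mem_Zms_pow_add hd).mp hx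
    have hd0 : d ≠ 0 := by
      intro h; subst h
      have : 0 < 2 ^ i := pow_pos (by norm_num) i
      omega
    rw [Zms, if_neg hd0]
    simp only [Multiset.mem_map, ← Finset.mem_def, Finset.mem_filter, Finset.mem_range]
    refine ⟨i, ⟨?_, hbit⟩, rfl⟩
    have := Nat.le_log_of_pow_le (by norm_num : 1 < 2) hxd
    omega
  -- counts in A are at most j
  have hcountA : ∀ x, Multiset.count x A ≤ j := by
    intro x
    rw [hA, Multiset.count_nsmul]
    have := Multiset.nodup_iff_count_le_one.mp (Zms_nodup n) x
    calc j * Multiset.count x (Zms n) ≤ j * 1 := Nat.mul_le_mul_left j this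
    _ = j := Nat.mul_one j
  apply le_antisymm
  · -- upper bound
    apply le_min
    · -- mfun j n ≤ mfun j d + 2^e
      apply phi_le
      intro T hT hTsum
      by_cases hbig : 2 ^ e ≤ T.sum
      · obtain ⟨U, hUle, hUsum⟩ := extract_pow e T
          (fun x hx => hdvdA x (Multiset.mem_of_le hT hx)) hbig
        have hcancel : T - U + U = T := tsub_add_cancel_of_le hUle
        have hsum' : (T - U).sum + U.sum = T.sum := by
          rw [← Multiset.sum_add, hcancel]
        have hRsum : (T - U).sum ≤ d := by omega
        -- T - U ≤ j • Zms d
        have hRle : T - U ≤ j • Zms d := by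
          rw [Multiset.le_iff_count]
          intro x
          by_cases hx : x ∈ T - U
          · have hxZ : x ∈ Zms n :=
              Multiset.mem_of_mem_nsmul
                (Multiset.mem_of_le hT (Multiset.mem_of_le (tsub_le_self) hx))
            have hxd : x ≤ d :=
              le_trans (Multiset.single_le_sum (fun _ _ => Nat.zero_le _) _ hx) hRsum
            have hxZd : x ∈ Zms d := hsmall x hxZ hxd
            rw [Multiset.count_nsmul, Multiset.count_eq_one_of_mem (Zms_nodup d) hxZd]
            have hcT := Multiset.le_iff_count.mp hT x
            have hAA : Multiset.count x A = Multiset.count x (j • Zms n) := rfl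
            have := hcountA x
            have hsub := Multiset.count_sub x T U
            omega
          · rw [Multiset.count_eq_zero_of_notMem hx]
            exact Nat.zero_le _
        have hmle : (T - U).sum ≤ mfun j d := le_phi hRle hRsum
        omega
      · have : T.sum ≤ 2 ^ e := le_of_not_ge hbig
        omega
    · -- mfun j n ≤ total sum
      apply phi_le
      intro T hT _
      rw [← hAsum]
      have hcancel : A - T + T = A := tsub_add_cancel_of_le hT
      have : (A - T).sum + T.sum = A.sum := by rw [← Multiset.sum_add, hcancel]
      omega
  · -- lower bound
    obtain ⟨Td, hTdle, hTdsum, hTdn⟩ := phi_spec (j • Zms d) d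
    have hTdA : Td ≤ A := by
      refine le_trans hTdle ?_
      rw [hA]
      exact nsmul_le_nsmul_right (Zms_le_Zms_pow_add e d hd) j
    have hmeq : mfun j d = phi (j • Zms d) d := rfl
    have hmjd : mfun j d ≤ d := by rw [hmeq]; exact hTdn
    rcases le_or_gt A.sum (mfun j d + 2 ^ e) with hc | hc
    · -- take everything
      refine le_trans (min_le_right _ _) ?_
      have hAn : A.sum ≤ n := by omega
      rw [← hAsum]
      exact le_phi le_rfl hAn
    · -- take Td plus an extracted 2^e
      refine le_trans (min_le_left _ _) ?_
      have hcancel : A - Td + Td = A := tsub_add_cancel_of_le hTdA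
      have hsum' : (A - Td).sum + Td.sum = A.sum := by
        rw [← Multiset.sum_add, hcancel]
      have hWsum : 2 ^ e ≤ (A - Td).sum := by
        rw [hTdsum, ← hmeq] at hsum'
        omega
      obtain ⟨U, hUle, hUsum⟩ := extract_pow e (A - Td)
        (fun x hx => hdvdA x (Multiset.mem_of_le (tsub_le_self) hx)) hWsum
      have hTle : Td + U ≤ A := add_le_of_le_sub hTdA hUle
      have hTsum : (Td + U).sum = mfun j d + 2 ^ e := by
        rw [Multiset.sum_add, hTdsum, hUsum, ← hmeq]
      have : (Td + U).sum ≤ n := by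
        rw [hTsum, hn]
        omega
      have := le_phi hTle this
      rw [hTsum] at this
      exact this
end

section
/- Let n = 2^e + d with 0 ≤ d < 2^e and let k ≥ 2. Then h̃_k(n) = min(h̃_k(d) + 2^e, (k−1)(2^{e+1} − 1 − n)), where h̃_k(0) = 0. -/
open Finset

lemma sum_range_two_pow_s7 (N : ℕ) : ∑ j ∈ range N, 2^j = 2^N - 1 := by
  induction N with
  | zero => simp
  | succ N ih =>
    have h1 : (1:ℕ) ≤ 2^N := Nat.one_le_two_pow
    rw [Finset.sum_range_succ, ih, pow_succ]
    omega

lemma sum_two_pow_ite_testBit (N x : ℕ) :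
    ∑ j ∈ range N, (if x.testBit j then 2^j else 0) = x % 2^N := by
  induction N with
  | zero => simp [Nat.mod_one]
  | succ N ih =>
    rw [Finset.sum_range_succ, ih, pow_succ, Nat.mod_mul]
    rw [Nat.testBit_eq_decide_div_mod_eq]
    rcases Nat.mod_two_eq_zero_or_one (x / 2^N) with h | h <;> simp [h] <;> ring

lemma sum_ite_two_pow_lt (N : ℕ) (p : ℕ → Bool) :
    (∑ j ∈ range N, if p j then 2^j else 0) < 2^N := by
  calc (∑ j ∈ range N, if p j then 2^j else 0) ≤ ∑ j ∈ range N, 2^j := by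
        apply Finset.sum_le_sum; intro i _; split <;> simp
    _ < 2^N := by rw [sum_range_two_pow_s7]; have := Nat.one_le_two_pow (n := N); omega

lemma testBit_sum_ite (N : ℕ) (p : ℕ → Bool) (t : ℕ) :
    (∑ j ∈ range N, if p j then 2^j else 0).testBit t = (decide (t < N) && p t) := by
  induction N with
  | zero => simp
  | succ N ih =>
    rcases Nat.lt_or_ge t (N+1) with h1 | h1
    · rw [Finset.sum_range_succ]
      by_cases hp : p N
      · rw [if_pos hp, add_comm, ← one_mul (2^N), mul_comm _ (2^N),
          Nat.testBit_two_pow_mul_add 1 (sum_ite_two_pow_lt N p) t]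
        by_cases ht : t < N
        · simp [ht, ih, Nat.lt_succ_of_lt ht]
        · have : t = N := by omega
          subst this
          simp [ht, hp, Nat.sub_self]
      · rw [if_neg hp, add_zero, ih]
        by_cases ht : t < N
        · simp [ht, Nat.lt_succ_of_lt ht]
        · have : t = N := by omega
          subst this
          simp [ht, hp]
    · have hlt : (∑ j ∈ range (N+1), if p j then 2^j else 0) < 2^t :=
        lt_of_lt_of_le (sum_ite_two_pow_lt (N+1) p) (Nat.pow_le_pow_right (by norm_num) h1)
      rw [Nat.testBit_lt_two_pow hlt]
      have : ¬ t < N + 1 := by omega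
      simp [this]

lemma and_eq_zero_iff' (x y : ℕ) : x &&& y = 0 ↔ ∀ j, x.testBit j = true → y.testBit j = false := by
  constructor
  · intro h j hj
    have := congrArg (fun z => z.testBit j) h
    simp only [Nat.testBit_and, Nat.zero_testBit, hj, Bool.true_and] at this
    exact this
  · intro h
    apply Nat.eq_of_testBit_eq
    intro j
    simp only [Nat.testBit_and, Nat.zero_testBit, Bool.and_eq_false_iff]
    by_cases hx : x.testBit j
    · exact Or.inr (h j hx)
    · exact Or.inl (by simpa using hx)

lemma and_zero_split (n b : ℕ) :
    n &&& b = 0 ↔ ((n/2) &&& (b/2) = 0 ∧ ¬(n % 2 = 1 ∧ b % 2 = 1)) := by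
  rw [and_eq_zero_iff', and_eq_zero_iff']
  constructor
  · intro h
    refine ⟨fun j hj => ?_, fun hc => ?_⟩
    · have := h (j+1)
      simp only [Nat.testBit_add_one] at this
      exact this hj
    · have := h 0
      simp only [Nat.testBit_zero] at this
      simp [hc.1, hc.2] at this
  · rintro ⟨h1, h2⟩ j hj
    cases j with
    | zero =>
      simp only [Nat.testBit_zero] at hj ⊢
      simp only [decide_eq_true_eq] at hj
      rcases Nat.mod_two_eq_zero_or_one b with h | h
      · simp [h]
      · exact absurd ⟨hj, h⟩ h2
    | succ j =>
      rw [Nat.testBit_add_one] at hj ⊢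
      exact h1 j hj

lemma odd_choose_add_iff' : ∀ (m n b : ℕ), n + b ≤ m → (Odd ((n + b).choose n) ↔ n &&& b = 0) := by
  intro m
  induction m with
  | zero =>
    intro n b h
    have hn : n = 0 := by omega
    have hb : b = 0 := by omega
    subst hn hb
    simp
  | succ m ih =>
    intro n b h
    rcases Nat.eq_zero_or_pos (n + b) with h0 | h0
    · have hn : n = 0 := by omega
      have hb : b = 0 := by omega
      subst hn hb; simp
    · have : Fact (Nat.Prime 2) := ⟨Nat.prime_two⟩
      have lucas := Choose.choose_modEq_choose_mod_mul_choose_div_nat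
        (n := n + b) (k := n) (p := 2)
      rw [Nat.ModEq] at lucas
      rw [Nat.odd_iff, lucas, and_zero_split]
      by_cases hc : n % 2 = 1 ∧ b % 2 = 1
      · have e1 : (n + b) % 2 = 0 := by omega
        have c0 : ((n + b) % 2).choose (n % 2) = 0 := by rw [e1, hc.1]; rfl
        rw [c0, zero_mul]
        simp [hc.1, hc.2]
      · have e2 : (n + b) / 2 = n / 2 + b / 2 := by omega
        have c0 : ((n + b) % 2).choose (n % 2) = 1 := by
          have e1 : (n + b) % 2 = n % 2 + b % 2 := by omega
          rw [e1]
          rcases Nat.mod_two_eq_zero_or_one n with hn2 | hn2 <;>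
            rcases Nat.mod_two_eq_zero_or_one b with hb2 | hb2 <;>
            simp [hn2, hb2] at hc ⊢
        rw [e2, c0, one_mul]
        have ih' := ih (n/2) (b/2) (by omega)
        rw [Nat.odd_iff] at ih'
        rw [ih']
        constructor
        · exact fun ha => ⟨ha, hc⟩
        · exact fun ha => ha.1

lemma odd_choose_add_iff (n b : ℕ) : Odd ((n + b).choose n) ↔ n &&& b = 0 :=
  odd_choose_add_iff' (n + b) n b le_rfl

lemma dvd_squeeze {a b g : ℕ} (h : a < b + g) (ha : g ∣ a) (hb : g ∣ b) : a ≤ b := by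
  by_contra hc
  push_neg at hc
  have h1 : g ∣ a - b := Nat.dvd_sub ha hb
  have h2 : 0 < a - b := by omega
  have := Nat.le_of_dvd h2 h1
  omega

/-- Greedy selection: from counts `c` supported on bits `< N`, one can pick `c' ≤ c`
with sum `S'` satisfying `T ≤ S' < T + 2^i` and `2^i ∣ S'` for some `i < N`. -/
lemma greedy : ∀ (N : ℕ) (c : ℕ → ℕ) (T : ℕ), 1 ≤ T →
    T ≤ ∑ j ∈ range N, c j * 2^j →
    ∃ c' : ℕ → ℕ, (∀ j, c' j ≤ c j) ∧ ∃ i < N,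
      (2^i ∣ ∑ j ∈ range N, c' j * 2^j) ∧ T ≤ ∑ j ∈ range N, c' j * 2^j ∧
      (∑ j ∈ range N, c' j * 2^j) < T + 2^i := by
  intro N
  induction N with
  | zero => intro c T h1 h2; simp at h2; omega
  | succ N ih =>
    intro c T h1 h2
    rw [Finset.sum_range_succ] at h2
    set a := c N with ha
    by_cases hT : T ≤ a * 2^N
    · -- take t = ceil(T / 2^N) copies of 2^N
      set t := (T + 2^N - 1) / 2^N with htdef
      have hpos : 0 < 2^N := Nat.pow_pos (by norm_num)
      have hdm : 2^N * t + (T + 2^N - 1) % 2^N = T + 2^N - 1 := Nat.div_add_mod _ _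
      have hmlt : (T + 2^N - 1) % 2^N < 2^N := Nat.mod_lt _ hpos
      have hy1 : T ≤ t * 2^N := by rw [mul_comm]; omega
      have hy2 : t * 2^N < T + 2^N := by rw [mul_comm]; omega
      have hta : t ≤ a := by
        have : t * 2^N < (a + 1) * 2^N := by
          calc t * 2^N < T + 2^N := hy2
            _ ≤ a * 2^N + 2^N := by omega
            _ = (a+1) * 2^N := by ring
        exact Nat.lt_succ_iff.mp (lt_of_mul_lt_mul_right this (Nat.zero_le _))
      refine ⟨fun j => if j = N then t else 0, ?_, N, Nat.lt_succ_self N, ?_, ?_, ?_⟩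
      · intro j
        by_cases hj : j = N <;> simp [hj, hta, ← ha]
      all_goals
        rw [Finset.sum_range_succ, Finset.sum_eq_zero (fun j hj => by
          simp only [Finset.mem_range] at hj; simp [Nat.ne_of_lt hj]),
          show (fun j => if j = N then t else 0) N = t from if_pos rfl, zero_add]
      · exact Dvd.intro t (mul_comm _ _)
      · exact hy1
      · exact hy2
    · push_neg at hT
      have h1' : 1 ≤ T - a * 2^N := by omega
      have h2' : T - a * 2^N ≤ ∑ j ∈ range N, c j * 2^j := by omega
      obtain ⟨c', hc'le, i, hiN, hdvd, hlo, hhi⟩ := ih c (T - a * 2^N) h1' h2'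
      refine ⟨fun j => if j = N then a else if j < N then c' j else 0, ?_, i,
        Nat.lt_succ_of_lt hiN, ?_, ?_, ?_⟩
      · intro j
        by_cases hj : j = N
        · simp [hj, ← ha]
        · by_cases hj2 : j < N <;> simp [hj, hj2, hc'le j]
      all_goals
        rw [Finset.sum_range_succ,
          show (fun j => if j = N then a else if j < N then c' j else 0) N = a from if_pos rfl,
          Finset.sum_congr rfl (fun j hj => by
            simp only [Finset.mem_range] at hj
            show (if j = N then a else if j < N then c' j else 0) * 2^j = c' j * 2^j
            rw [if_neg (Nat.ne_of_lt hj), if_pos hj])]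
      · exact Nat.dvd_add hdvd (Dvd.dvd.mul_left (pow_dvd_pow 2 (le_of_lt hiN)) a)
      · omega
      · omega

def gs (k n : ℕ) : Set ℕ :=
  {s : ℕ | ∃ b : Fin (k - 1) → ℕ, s = ∑ i, b i ∧ s ≤ n ∧ ∀ i, Odd ((n + b i).choose n)}

lemma zero_mem_gs (k n : ℕ) : 0 ∈ gs k n :=
  ⟨fun _ => 0, by simp, Nat.zero_le n, fun i => by simp⟩

lemma le_n_of_mem_gs {k n s : ℕ} (h : s ∈ gs k n) : s ≤ n := by
  obtain ⟨b, _, h, _⟩ := h; exact h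

lemma bddAbove_gs (k n : ℕ) : BddAbove (gs k n) :=
  ⟨n, fun _ hs => le_n_of_mem_gs hs⟩

lemma sum_range_ite_lt (K cj x : ℕ) (h : cj ≤ K) :
    ∑ i ∈ range K, (if i < cj then x else 0) = cj * x := by
  rw [← Finset.sum_filter]
  have : (range K).filter (· < cj) = range cj := by
    ext i
    simp only [Finset.mem_filter, Finset.mem_range]
    omega
  rw [this, Finset.sum_const, Finset.card_range, smul_eq_mul]

/-- From a good tuple, extract bit counts. -/
lemma counts_of_mem {k n s N : ℕ} (hn : n < 2^N) (hs : s ∈ gs k n) :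
    ∃ c : ℕ → ℕ, (∀ j, c j ≤ k - 1) ∧ (∀ j, c j ≠ 0 → n.testBit j = false) ∧
      s = ∑ j ∈ range N, c j * 2^j := by
  obtain ⟨b, hsum, hsn, hodd⟩ := hs
  have hdis : ∀ i, ∀ j, (b i).testBit j = true → n.testBit j = false := by
    intro i j hj
    have h0 : n &&& b i = 0 := (odd_choose_add_iff n (b i)).mp (hodd i)
    rw [and_eq_zero_iff'] at h0
    by_cases hnj : n.testBit j
    · have := h0 j hnj
      rw [this] at hj
      exact absurd hj (by simp)
    · simpa using hnj
  refine ⟨fun j => ∑ i : Fin (k-1), if (b i).testBit j then 1 else 0, fun j => ?_, fun j hj => ?_, ?_⟩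
  · calc (∑ i : Fin (k-1), if (b i).testBit j then 1 else 0)
        ≤ ∑ i : Fin (k-1), 1 := Finset.sum_le_sum (fun i _ => by split <;> simp)
      _ = k - 1 := by simp
  · by_contra hc
    apply hj
    apply Finset.sum_eq_zero
    intro i _
    rw [if_neg]
    intro hb
    rw [hdis i j hb] at hc
    exact hc rfl
  · have hb_lt : ∀ i, b i < 2^N := by
      intro i
      calc b i ≤ ∑ i', b i' := Finset.single_le_sum (fun i' _ => Nat.zero_le _) (Finset.mem_univ i)
        _ = s := hsum.symm
        _ ≤ n := hsn
        _ < 2^N := hn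
    have hb_eq : ∀ i, b i = ∑ j ∈ range N, (if (b i).testBit j then 2^j else 0) := by
      intro i
      rw [sum_two_pow_ite_testBit, Nat.mod_eq_of_lt (hb_lt i)]
    calc s = ∑ i, b i := hsum
      _ = ∑ i : Fin (k-1), ∑ j ∈ range N, (if (b i).testBit j then 2^j else 0) := by
          exact Finset.sum_congr rfl (fun i _ => hb_eq i)
      _ = ∑ j ∈ range N, ∑ i : Fin (k-1), (if (b i).testBit j then 2^j else 0) :=
          Finset.sum_comm
      _ = ∑ j ∈ range N, (∑ i : Fin (k-1), if (b i).testBit j then 1 else 0) * 2^j := by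
          refine Finset.sum_congr rfl (fun j _ => ?_)
          rw [Finset.sum_mul]
          refine Finset.sum_congr rfl (fun i _ => ?_)
          split <;> simp

/-- From bit counts, build a good tuple. -/
lemma mem_of_counts {k n N : ℕ} (c : ℕ → ℕ) (hc : ∀ j, c j ≤ k - 1)
    (hsupp : ∀ j < N, c j ≠ 0 → n.testBit j = false)
    (hle : ∑ j ∈ range N, c j * 2^j ≤ n) :
    (∑ j ∈ range N, c j * 2^j) ∈ gs k n := by
  refine ⟨fun i => ∑ j ∈ range N, if (i : ℕ) < c j then 2^j else 0, ?_, hle, ?_⟩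
  · rw [Finset.sum_comm]
    refine Finset.sum_congr rfl (fun j _ => ?_)
    rw [Fin.sum_univ_eq_sum_range (fun i => if i < c j then (2:ℕ)^j else 0) (k-1),
      sum_range_ite_lt (k-1) (c j) (2^j) (hc j)]
  · intro i
    rw [odd_choose_add_iff, and_eq_zero_iff']
    intro t ht
    have hbit : (∑ j ∈ range N, if (i : ℕ) < c j then 2^j else 0).testBit t
        = (decide (t < N) && decide ((i:ℕ) < c t)) := by
      have : (∑ j ∈ range N, if (i : ℕ) < c j then 2^j else 0)
          = ∑ j ∈ range N, if (fun j => decide ((i:ℕ) < c j)) j then 2^j else 0 := by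
        refine Finset.sum_congr rfl (fun j _ => ?_)
        by_cases h : (i:ℕ) < c j <;> simp [h]
      rw [this, testBit_sum_ite]
    rw [hbit]
    by_cases htN : t < N
    · by_cases hic : (i:ℕ) < c t
      · have : c t ≠ 0 := by omega
        rw [hsupp t htN this] at ht
        exact absurd ht (by simp)
      · simp [hic]
    · simp [htN]

/-- `htilde k n` is the maximum of the sum of `b_1, ..., b_(k-1)` over tuples of naturals
with sum at most `n` and every binomial coefficient `C(n + b_i, n)` odd. -/
noncomputable def htilde (k n : ℕ) : ℕ :=
  sSup {s : ℕ | ∃ b : Fin (k - 1) → ℕ, s = ∑ i, b i ∧ s ≤ n ∧ ∀ i, Odd ((n + b i).choose n)}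

lemma htilde_eq (k n : ℕ) : htilde k n = sSup (gs k n) := rfl

lemma htilde_le (k n : ℕ) : htilde k n ≤ n :=
  csSup_le ⟨0, zero_mem_gs k n⟩ (fun _ hs => le_n_of_mem_gs hs)

lemma htilde_mem (k n : ℕ) : htilde k n ∈ gs k n :=
  Nat.sSup_mem ⟨0, zero_mem_gs k n⟩ (bddAbove_gs k n)

lemma le_htilde {k n s : ℕ} (h : s ∈ gs k n) : s ≤ htilde k n :=
  le_csSup (bddAbove_gs k n) h

/-- If `n = 2^e + d` with `0 ≤ d < 2^e` and `k ≥ 2`, then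
`htilde_k(n) = min(htilde_k(d) + 2^e, (k-1)(2^(e+1) - 1 - n))`. -/
theorem htilde_recursion (e d k : ℕ) (hd : d < 2 ^ e) (hk : 2 ≤ k) :
    htilde k (2 ^ e + d) =
      min (htilde k d + 2 ^ e) ((k - 1) * (2 ^ (e + 1) - 1 - (2 ^ e + d))) := by
  have hpe : (1:ℕ) ≤ 2^e := Nat.one_le_two_pow
  have hps : (2:ℕ)^(e+1) = 2 * 2^e := by rw [pow_succ]; ring
  set n := 2^e + d with hn
  set K := k - 1 with hK
  have hn2 : n < 2^(e+1) := by omega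
  -- testBit facts for n
  have hbit : ∀ j, n.testBit j = if j < e then d.testBit j else (1).testBit (j - e) := by
    intro j
    have : n = 2^e * 1 + d := by omega
    rw [this, Nat.testBit_two_pow_mul_add 1 hd j]
  have hbitE : n.testBit e = true := by
    rw [hbit e]; simp
  have hbitLow : ∀ j < e, n.testBit j = d.testBit j := by
    intro j hj; rw [hbit j, if_pos hj]
  -- complement sums
  have compl_sum : ∀ (N x : ℕ), x < 2^N →
      ∑ j ∈ range N, (if x.testBit j then 0 else 2^j) = 2^N - 1 - x := by
    intro N x hx
    have h1 : ∑ j ∈ range N, ((if x.testBit j then 2^j else 0) + (if x.testBit j then 0 else 2^j))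
        = 2^N - 1 := by
      rw [← sum_range_two_pow_s7 N]
      refine Finset.sum_congr rfl (fun j _ => ?_)
      split <;> simp
    rw [Finset.sum_add_distrib, sum_two_pow_ite_testBit, Nat.mod_eq_of_lt hx] at h1
    omega
  have hM : 2^(e+1) - 1 - n = 2^e - 1 - d := by omega
  have hMn : ∑ j ∈ range (e+1), (if n.testBit j then 0 else 2^j) = 2^(e+1) - 1 - n :=
    compl_sum (e+1) n hn2
  have hMd : ∑ j ∈ range e, (if d.testBit j then 0 else 2^j) = 2^e - 1 - d :=
    compl_sum e d hd
  apply le_antisymm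
  · -- upper bound
    apply csSup_le ⟨0, zero_mem_gs k n⟩
    intro s hs
    have hsn : s ≤ n := le_n_of_mem_gs hs
    obtain ⟨c, hcK, hcsupp, hcsum⟩ := counts_of_mem hn2 hs
    refine le_min ?_ ?_
    · -- s ≤ htilde k d + 2^e
      have hce : c e = 0 := by
        by_contra hce
        rw [hcsupp e hce] at hbitE
        exact absurd hbitE (by simp)
      have hcsum' : s = ∑ j ∈ range e, c j * 2^j := by
        rw [hcsum, Finset.sum_range_succ, hce, zero_mul, add_zero]
      have hdsupp : ∀ j < e, c j ≠ 0 → d.testBit j = false := by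
        intro j hj hcj
        rw [← hbitLow j hj]
        exact hcsupp j hcj
      by_cases hsd : s ≤ d
      · have : s ∈ gs k d := by
          rw [hcsum']
          exact mem_of_counts c hcK hdsupp (by omega)
        have := le_htilde this
        omega
      · push_neg at hsd
        obtain ⟨c', hc'le, i, hie, hdvd, hlo, hhi⟩ :=
          greedy e c (s - d) (by omega) (by omega)
        set A := ∑ j ∈ range e, c' j * 2^j with hA
        have hAle : A ≤ 2^e := by
          apply dvd_squeeze _ hdvd (pow_dvd_pow 2 (le_of_lt hie))
          calc A < (s - d) + 2^i := hhi
            _ ≤ 2^e + 2^i := by omega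
        have hsplit : ∑ j ∈ range e, (c j - c' j) * 2^j + A = s := by
          rw [hA, ← Finset.sum_add_distrib, hcsum']
          refine Finset.sum_congr rfl (fun j _ => ?_)
          have := hc'le j
          rw [← add_mul]
          congr 1
          omega
        have hmem : (∑ j ∈ range e, (c j - c' j) * 2^j) ∈ gs k d := by
          apply mem_of_counts _ (fun j => le_trans (Nat.sub_le _ _) (hcK j))
            (fun j hj hcj => hdsupp j hj (by omega))
          omega
        have := le_htilde hmem
        omega
    · -- s ≤ K * M
      have : s ≤ ∑ j ∈ range (e+1), (if n.testBit j then 0 else K * 2^j) := by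
        rw [hcsum]
        refine Finset.sum_le_sum (fun j _ => ?_)
        by_cases hb : n.testBit j
        · have : c j = 0 := by
            by_contra hcj
            rw [hcsupp j hcj] at hb
            exact absurd hb (by simp)
          simp [hb, this]
        · rw [if_neg hb]
          exact Nat.mul_le_mul_right _ (hcK j)
      calc s ≤ ∑ j ∈ range (e+1), (if n.testBit j then 0 else K * 2^j) := this
        _ = K * ∑ j ∈ range (e+1), (if n.testBit j then 0 else 2^j) := by
            rw [Finset.mul_sum]
            refine Finset.sum_congr rfl (fun j _ => ?_)
            split <;> simp
        _ = K * (2^(e+1) - 1 - n) := by rw [hMn]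
  · -- lower bound
    have hs0 : htilde k d ∈ gs k d := htilde_mem k d
    have hs0d : htilde k d ≤ d := htilde_le k d
    by_cases hcase : K * (2^(e+1) - 1 - n) ≤ htilde k d + 2^e
    · rw [min_eq_right hcase]
      set c : ℕ → ℕ := fun j => if n.testBit j then 0 else K with hc
      have hsum : ∑ j ∈ range (e+1), c j * 2^j = K * (2^(e+1) - 1 - n) := by
        rw [← hMn, Finset.mul_sum]
        refine Finset.sum_congr rfl (fun j _ => ?_)
        by_cases hb : n.testBit j <;> simp [hc, hb]
      have hmem : (∑ j ∈ range (e+1), c j * 2^j) ∈ gs k n := by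
        apply mem_of_counts c (fun j => by by_cases hb : n.testBit j <;> simp [hc, hb, hK])
          (fun j _ hcj => by
            simp only [hc] at hcj
            by_cases hb : n.testBit j
            · simp [hb] at hcj
            · simpa using hb)
        rw [hsum]; omega
      rw [hsum] at hmem
      exact le_htilde hmem
    · push_neg at hcase
      rw [min_eq_left (le_of_lt hcase)]
      obtain ⟨c, hcK, hcsupp, hcsum⟩ := counts_of_mem hd hs0
      set cap : ℕ → ℕ := fun j => if d.testBit j then 0 else K - c j with hcap
      have hcapsum : ∑ j ∈ range e, (c j + cap j) * 2^j = K * (2^e - 1 - d) := by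
        rw [← hMd, Finset.mul_sum]
        refine Finset.sum_congr rfl (fun j _ => ?_)
        simp only [hcap]
        by_cases hb : d.testBit j
        · have : c j = 0 := by
            by_contra hcj
            rw [hcsupp j hcj] at hb
            exact absurd hb (by simp)
          simp [hb, this]
        · have := hcK j
          rw [if_neg hb, if_neg hb]
          congr 1
          omega
      have hgesum : 2^e ≤ ∑ j ∈ range e, cap j * 2^j := by
        have h1 : ∑ j ∈ range e, (c j + cap j) * 2^j
            = ∑ j ∈ range e, c j * 2^j + ∑ j ∈ range e, cap j * 2^j := by
          rw [← Finset.sum_add_distrib]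
          refine Finset.sum_congr rfl (fun j _ => by rw [add_mul])
        rw [hcapsum, ← hcsum] at h1
        have : K * (2^e - 1 - d) = K * (2^(e+1) - 1 - n) := by rw [hM]
        omega
      obtain ⟨cap', hcap'le, i, hie, hdvd, hlo, hhi⟩ :=
        greedy e cap (2^e) (by omega) hgesum
      set A := ∑ j ∈ range e, cap' j * 2^j with hA
      have hAeq : A = 2^e := by
        have : A ≤ 2^e := by
          apply dvd_squeeze _ hdvd (pow_dvd_pow 2 (le_of_lt hie))
          omega
        omega
      have hCsum : ∑ j ∈ range e, (c j + cap' j) * 2^j = htilde k d + 2^e := by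
        have h1 : ∑ j ∈ range e, (c j + cap' j) * 2^j
            = ∑ j ∈ range e, c j * 2^j + A := by
          rw [hA, ← Finset.sum_add_distrib]
          refine Finset.sum_congr rfl (fun j _ => by rw [add_mul])
        rw [h1, ← hcsum, hAeq]
      have hmem : (∑ j ∈ range e, (c j + cap' j) * 2^j) ∈ gs k n := by
        apply mem_of_counts _ (fun j => ?_) (fun j hj hcj => ?_)
        · rw [hCsum]; omega
        · have h1 := hcap'le j
          simp only [hcap] at h1
          by_cases hb : d.testBit j
          · have hc0 : c j = 0 := by
              by_contra hcj
              rw [hcsupp j hcj] at hb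
              exact absurd hb (by simp)
            simp [hb] at h1
            have := hcK j
            omega
          · rw [if_neg hb] at h1
            have := hcK j
            omega
        · rw [hbitLow j hj]
          rcases Nat.eq_zero_or_pos (c j) with h0 | h0
          · have h1 := hcap'le j
            simp only [hcap] at h1
            by_cases hb : d.testBit j
            · simp [hb] at h1
              omega
            · simpa using hb
          · exact hcsupp j (by omega)
      rw [hCsum] at hmem
      exact le_htilde hmem
end

section
/- For all n ≥ 0 and k ≥ 2, zcl_k(n) = (k−1)·n + h̃_k(n); that is, the maximum of a_1 + ⋯ + a_{k−1} over tuples with ∏_{i=1}^{k−1}(x_i + x_k)^{a_i} nonzero in (ℤ/2)[x_1,…,x_k]/(x_1^{n+1},…,x_k^{n+1}) is achieved by monomials of the form x_1^n ⋯ x_{k−1}^n x_k^ℓ with ℓ ≤ n, and equals (k−1)n + h̃_k(n). -/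
lemma eqz (x : ℕ) : x = 0 ↔ ∀ i, x.testBit i = false :=
  ⟨by rintro rfl i; simp, fun h => Nat.eq_of_testBit_eq (fun i => by simp [h])⟩

lemma land_split (t a b : ℕ) :
    a &&& b = 0 ↔ (a % 2^t) &&& (b % 2^t) = 0 ∧ (a / 2^t) &&& (b / 2^t) = 0 := by
  have hd : ∀ x : ℕ, x / 2^t = x >>> t := fun x => (Nat.shiftRight_eq_div_pow x t).symm
  simp only [eqz, hd, Nat.testBit_land, Nat.testBit_mod_two_pow, Nat.testBit_shiftRight,
    Bool.and_eq_false_iff]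
  constructor
  · intro h
    refine ⟨fun i => ?_, fun j => h (t + j)⟩
    rcases h i with h' | h' <;> simp [h']
  · rintro ⟨h1, h2⟩ i
    by_cases hi : i < t
    · rcases h1 i with h' | h' <;> simp_all
    · have := h2 (i - t)
      have : t + (i - t) = i := by omega
      rcases h2 (i - t) with h' | h' <;> rw [this] at h' <;> simp [h']

lemma disj_add_lt : ∀ t a b : ℕ, a < 2^t → b < 2^t → a &&& b = 0 → a + b < 2^t := by
  intro t
  induction t with
  | zero => intro a b ha hb _; omega
  | succ t IH =>
    intro a b ha hb hab
    have hs := (land_split 1 a b).mp hab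
    norm_num at hs
    have h1 : a % 2 = 0 ∨ b % 2 = 0 := by
      rcases Nat.mod_two_eq_zero_or_one a with h | h <;> rcases Nat.mod_two_eq_zero_or_one b with h' | h' <;>
        simp_all
    have hp : 2 ^ (t+1) = 2 * 2^t := by ring
    have := IH (a/2) (b/2) (by omega) (by omega) hs.2
    omega

lemma compl_disj : ∀ t m : ℕ, m < 2^t → (2^t - 1 - m) &&& m = 0 := by
  intro t
  induction t with
  | zero => intro m hm; interval_cases m; rfl
  | succ t IH =>
    intro m hm
    have hp : 2 ^ (t+1) = 2 * 2^t := by ring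
    rw [land_split 1]
    norm_num
    constructor
    · have : (2^(t+1) - 1 - m) % 2 = 1 - m % 2 := by omega
      rw [this]
      rcases Nat.mod_two_eq_zero_or_one m with h | h <;> rw [h] <;> decide
    · have : (2^(t+1) - 1 - m) / 2 = 2^t - 1 - m/2 := by omega
      rw [this]
      exact IH _ (by omega)


lemma odd_choose_aux : ∀ N a b : ℕ, a + b ≤ N → (Odd ((a+b).choose a) ↔ a &&& b = 0) := by
  intro N
  induction N with
  | zero =>
    intro a b h
    have ha : a = 0 := by omega
    have hb : b = 0 := by omega
    subst ha; subst hb; simp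
  | succ N IH =>
    intro a b h
    haveI : Fact (Nat.Prime 2) := ⟨Nat.prime_two⟩
    have hmod : (a+b).choose a % 2 = ((a+b)%2).choose (a%2) * (((a+b)/2).choose (a/2)) % 2 :=
      Choose.choose_modEq_choose_mod_mul_choose_div_nat
    have hsplit := land_split 1 a b
    norm_num at hsplit
    by_cases hodd : a % 2 = 1 ∧ b % 2 = 1
    · have h2 : (a+b) % 2 = 0 := by omega
      rw [h2, hodd.1] at hmod
      simp [Nat.choose] at hmod
      constructor
      · intro hO
        rw [Nat.odd_iff] at hO
        omega
      · intro hz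
        rw [hsplit] at hz
        rw [hodd.1, hodd.2] at hz
        simp at hz
    · have h2 : (a+b) % 2 = a % 2 + b % 2 := by omega
      have h3 : (a+b) / 2 = a / 2 + b / 2 := by omega
      have h4 : (a % 2 + b % 2).choose (a % 2) = 1 := by
        rcases Nat.mod_two_eq_zero_or_one a with h' | h' <;>
          rcases Nat.mod_two_eq_zero_or_one b with h'' | h'' <;> simp_all
      rw [h2, h3, h4, one_mul] at hmod
      have h5 : a % 2 &&& b % 2 = 0 := by
        rcases Nat.mod_two_eq_zero_or_one a with h' | h' <;>
          rcases Nat.mod_two_eq_zero_or_one b with h'' | h'' <;> simp_all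
      have h6 := IH (a/2) (b/2) (by omega)
      rw [Nat.odd_iff, hmod, ← Nat.odd_iff, h6, hsplit]
      simp [h5]

lemma odd_choose_iff (a b : ℕ) : Odd ((a+b).choose a) ↔ a &&& b = 0 :=
  odd_choose_aux (a+b) a b le_rfl

lemma keyL : ∀ t n b c : ℕ, n < 2^t → b < 2^t → c ≤ n → c &&& b = 0 →
    ∃ b', b' ≤ b ∧ b' &&& n = 0 ∧ c + b ≤ n + b' := by
  intro t
  induction t with
  | zero => intro n b c hn hb hc _; exact ⟨0, by omega, by simp, by omega⟩
  | succ t IH =>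
    intro n b c hn hb hc hcb
    have hp : 2 ^ (t+1) = 2 * 2^t := by ring
    have hmod : ∀ x : ℕ, x < 2*2^t → 2^t ≤ x → x % 2^t = x - 2^t := by
      intro x h1 h2
      rw [Nat.mod_eq_sub_mod h2, Nat.mod_eq_of_lt (by omega)]
    have hmod' : ∀ x : ℕ, x < 2^t → x % 2^t = x := fun x h => Nat.mod_eq_of_lt h
    have hdiv1 : ∀ x : ℕ, x < 2*2^t → 2^t ≤ x → x / 2^t = 1 := by
      intro x h1 h2; rw [Nat.div_eq_sub_div (by positivity) h2, Nat.div_eq_of_lt (by omega)]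
    have hdiv0 : ∀ x : ℕ, x < 2^t → x / 2^t = 0 := fun x h => Nat.div_eq_of_lt h
    by_cases hn1 : n < 2^t
    · by_cases hb1 : b < 2^t
      · exact IH n b c hn1 hb1 hc hcb
      · push_neg at hb1
        have hsp := (land_split t c b).mp hcb
        rw [hmod' c (by omega), hmod b (by omega) hb1] at hsp
        obtain ⟨b₁', hle, hdisj, hineq⟩ := IH n (b - 2^t) c hn1 (by omega) hc hsp.1
        refine ⟨2^t + b₁', by omega, ?_, by omega⟩
        rw [land_split t]
        rw [hmod (2^t + b₁') (by omega) (by omega), hmod' n hn1,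
          hdiv1 (2^t + b₁') (by omega) (by omega), hdiv0 n hn1]
        simpa using hdisj
    · push_neg at hn1
      by_cases hc1 : 2^t ≤ c
      · have hsp := (land_split t c b).mp hcb
        rw [hdiv1 c (by omega) hc1] at hsp
        have hbH : b < 2^t := by
          by_contra hbH
          push_neg at hbH
          rw [hdiv1 b (by omega) hbH] at hsp
          simp at hsp
        rw [hmod c (by omega) hc1, hmod' b hbH] at hsp
        obtain ⟨b', hle, hdisj, hineq⟩ := IH (n - 2^t) b (c - 2^t) (by omega) hbH (by omega) hsp.1
        refine ⟨b', hle, ?_, by omega⟩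
        rw [land_split t, hmod' b' (by omega), hmod n (by omega) hn1,
          hdiv0 b' (by omega), hdiv1 n (by omega) hn1]
        simpa using hdisj
      · push_neg at hc1
        by_cases hb1 : b < 2^t
        · exact ⟨0, by omega, by simp, by
            have := disj_add_lt t c b hc1 hb1 hcb; omega⟩
        · push_neg at hb1
          have hsp := (land_split t c b).mp hcb
          rw [hmod' c hc1, hmod b (by omega) hb1] at hsp
          refine ⟨2^t - 1 - (n - 2^t), by omega, ?_, ?_⟩
          · rw [land_split t, hmod' (2^t - 1 - (n - 2^t)) (by omega), hmod n (by omega) hn1,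
              hdiv0 (2^t - 1 - (n - 2^t)) (by omega), hdiv1 n (by omega) hn1]
            exact ⟨compl_disj t (n - 2^t) (by omega), by simp⟩
          · have := disj_add_lt t c (b - 2^t) hc1 (by omega) hsp.1
            omega

lemma keyL' (n b c : ℕ) (hc : c ≤ n) (hd : c &&& b = 0) :
    ∃ b', b' ≤ b ∧ b' &&& n = 0 ∧ c + b ≤ n + b' := by
  refine keyL (n+b) n b c ?_ ?_ hc hd
  · calc n ≤ n + b := by omega
      _ < 2^(n+b) := Nat.lt_two_pow_self
  · calc b ≤ n + b := by omega
      _ < 2^(n+b) := Nat.lt_two_pow_self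

open MvPolynomial Finset

variable {K : ℕ}

noncomputable def mexp (e : Fin K → ℕ) (d : ℕ) : Fin (K+1) →₀ ℕ :=
  (∑ i, Finsupp.single i.castSucc (e i)) + Finsupp.single (Fin.last K) d

lemma mexp_castSucc (e : Fin K → ℕ) (d : ℕ) (j : Fin K) : mexp e d j.castSucc = e j := by
  rw [mexp, Finsupp.add_apply, Finsupp.finset_sum_apply]
  rw [Finsupp.single_apply, if_neg (Fin.castSucc_lt_last j).ne']
  simp only [Finsupp.single_apply, Fin.castSucc_inj]
  rw [Finset.sum_ite_eq' univ j (fun i => e i)]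
  simp

lemma mexp_last (e : Fin K → ℕ) (d : ℕ) : mexp e d (Fin.last K) = d := by
  rw [mexp, Finsupp.add_apply, Finsupp.finset_sum_apply]
  rw [Finsupp.single_apply, if_pos rfl]
  have : ∀ i : Fin K, Finsupp.single i.castSucc (e i) (Fin.last K) = 0 := by
    intro i
    rw [Finsupp.single_apply, if_neg (Fin.castSucc_lt_last i).ne]
  rw [Finset.sum_congr rfl (fun i _ => this i)]
  simp

lemma mexp_inj {e e' : Fin K → ℕ} {d d' : ℕ} (h : mexp e d = mexp e' d') : e = e' := by
  funext j
  rw [← mexp_castSucc e d j, h, mexp_castSucc]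

lemma single_sum' {ι : Type*} {s : Finset ι} {l : Fin (K+1)} {g : ι → ℕ} :
    ∑ i ∈ s, Finsupp.single l (g i) = Finsupp.single l (∑ i ∈ s, g i) := by
  induction s using Finset.cons_induction with
  | empty => simp
  | cons j s hj IH => rw [Finset.sum_cons, Finset.sum_cons, IH, Finsupp.single_add]

lemma monomial_prod' {ι : Type*} {s : Finset ι} {f : ι → (Fin (K+1) →₀ ℕ)} {c : ι → ZMod 2} :
    ∏ i ∈ s, (monomial (f i) (c i) : MvPolynomial (Fin (K+1)) (ZMod 2))
      = monomial (∑ i ∈ s, f i) (∏ i ∈ s, c i) := by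
  induction s using Finset.cons_induction with
  | empty => simp
  | cons j s hj IH => rw [Finset.prod_cons, Finset.sum_cons, Finset.prod_cons, IH, monomial_mul]

lemma expand_prod (a : Fin K → ℕ) :
    (∏ i, ((X i.castSucc + X (Fin.last K)) ^ (a i) : MvPolynomial (Fin (K+1)) (ZMod 2)))
    = ∑ e ∈ Fintype.piFinset (fun i => Finset.range (a i + 1)),
        monomial (mexp e (∑ i, (a i - e i))) (∏ i, ((a i).choose (e i) : ZMod 2)) := by
  have h1 : ∀ i : Fin K, ((X i.castSucc + X (Fin.last K)) ^ (a i) : MvPolynomial (Fin (K+1)) (ZMod 2))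
      = ∑ ei ∈ Finset.range (a i + 1),
          monomial (Finsupp.single i.castSucc ei + Finsupp.single (Fin.last K) (a i - ei))
            (((a i).choose ei : ZMod 2)) := by
    intro i
    rw [add_pow]
    refine Finset.sum_congr rfl fun ei _ => ?_
    rw [X_pow_eq_monomial, X_pow_eq_monomial, monomial_mul, one_mul]
    rw [(map_natCast (C : ZMod 2 →+* MvPolynomial (Fin (K+1)) (ZMod 2)) ((a i).choose ei)).symm,
      C_apply, monomial_mul, add_zero, one_mul]
  calc (∏ i, ((X i.castSucc + X (Fin.last K)) ^ (a i) : MvPolynomial (Fin (K+1)) (ZMod 2)))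
      = ∑ e ∈ Fintype.piFinset (fun i => Finset.range (a i + 1)),
          ∏ i, monomial (Finsupp.single i.castSucc (e i) + Finsupp.single (Fin.last K) (a i - e i))
            (((a i).choose (e i) : ZMod 2)) := by
        rw [Finset.prod_congr rfl (fun i _ => h1 i), Finset.prod_univ_sum]
    _ = _ := by
        refine Finset.sum_congr rfl fun e he => ?_
        rw [monomial_prod']
        congr 1
        rw [Finset.sum_add_distrib, mexp, single_sum']

lemma ideal_eq (n : ℕ) :
    (Set.range fun i : Fin (K+1) => ((X i : MvPolynomial (Fin (K+1)) (ZMod 2)) ^ (n+1)))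
      = (fun s => monomial s (1 : ZMod 2)) ''
          (Set.range fun i : Fin (K+1) => Finsupp.single i (n+1)) := by
  rw [← Set.range_comp]
  refine congrArg _ (funext fun i => ?_)
  simp [Function.comp, X_pow_eq_monomial]

lemma not_mem_span_iff (n : ℕ) (p : MvPolynomial (Fin (K+1)) (ZMod 2)) :
    p ∉ Ideal.span (Set.range fun i : Fin (K+1) => ((X i) ^ (n+1))) ↔
      ∃ m ∈ p.support, ∀ i, m i ≤ n := by
  rw [ideal_eq n, mem_ideal_span_monomial_image]
  push_neg
  refine exists_congr fun m => and_congr_right fun _ => ?_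
  constructor
  · intro h i
    have := h (Finsupp.single i (n+1)) ⟨i, rfl⟩
    rw [Finsupp.single_le_iff] at this; omega
  · rintro h s ⟨i, rfl⟩
    rw [Finsupp.single_le_iff]
    have := h i; omega

lemma char_lemma (n : ℕ) (a : Fin K → ℕ) :
    (Ideal.Quotient.mk (Ideal.span (Set.range fun i : Fin (K+1) =>
        (X i : MvPolynomial (Fin (K+1)) (ZMod 2)) ^ (n + 1)))
      (∏ i : Fin K, (X i.castSucc + X (Fin.last K)) ^ a i) ≠ 0)
    ↔ ∃ e : Fin K → ℕ, (∀ i, e i ≤ a i) ∧ (∀ i, e i ≤ n) ∧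
        (∀ i, Odd ((a i).choose (e i))) ∧ (∑ i, (a i - e i)) ≤ n := by
  rw [Ne, Ideal.Quotient.eq_zero_iff_mem, not_mem_span_iff n]
  constructor
  · rintro ⟨m, hm, hle⟩
    rw [mem_support_iff, expand_prod, coeff_sum] at hm
    obtain ⟨e, he, hne⟩ := Finset.exists_ne_zero_of_sum_ne_zero hm
    rw [coeff_monomial] at hne
    by_cases hmm : mexp e (∑ i, (a i - e i)) = m
    swap
    · rw [if_neg hmm] at hne; exact absurd rfl hne
    rw [if_pos hmm] at hne
    have hodd : ∀ i, Odd ((a i).choose (e i)) := by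
      intro i
      have h2 := Finset.prod_ne_zero_iff.mp hne i (mem_univ i)
      rw [Ne, ZMod.natCast_eq_zero_iff] at h2
      rw [Nat.odd_iff]
      omega
    refine ⟨e, fun i => ?_, fun i => ?_, hodd, ?_⟩
    · have := Fintype.mem_piFinset.mp he i
      rw [Finset.mem_range] at this; omega
    · have := hle i.castSucc
      rw [← hmm, mexp_castSucc] at this
      exact this
    · have := hle (Fin.last K)
      rw [← hmm, mexp_last] at this
      exact this
  · rintro ⟨e, hea, hen, hodd, hsum⟩
    refine ⟨mexp e (∑ i, (a i - e i)), ?_, ?_⟩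
    · rw [mem_support_iff, expand_prod, coeff_sum]
      rw [Finset.sum_eq_single e]
      · rw [coeff_monomial, if_pos rfl]
        rw [Finset.prod_ne_zero_iff]
        intro i _
        rw [Ne, ZMod.natCast_eq_zero_iff]
        have := hodd i; rw [Nat.odd_iff] at this; omega
      · intro e' _ hne
        rw [coeff_monomial, if_neg]
        intro hcontra
        exact hne (mexp_inj hcontra)
      · intro hcontra
        exact absurd (Fintype.mem_piFinset.mpr fun i =>
          Finset.mem_range.mpr (by have := hea i; omega)) hcontra
    · intro i
      rcases Fin.eq_castSucc_or_eq_last i with ⟨j, rfl⟩ | rfl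
      · rw [mexp_castSucc]; exact hen j
      · rw [mexp_last]; exact hsum

/-- For all `n ≥ 0` and `k ≥ 2`, `zcl_k(n) = (k-1)*n + htilde_k(n)`. -/
theorem zcl_eq_htilde (n k : ℕ) (hk : 2 ≤ k) :
    zcl k n = (k - 1) * n + htilde k n := by
  classical
  set T := {s : ℕ | ∃ b : Fin (k-1) → ℕ, s = ∑ i, b i ∧ s ≤ n ∧
      ∀ i, Odd ((n + b i).choose n)} with hTdef
  have hTsub : ∀ s ∈ T, s ≤ n := by rintro s ⟨b, rfl, h, _⟩; exact h
  have hT0 : 0 ∈ T := ⟨fun _ => 0, by simp, by simp, fun i => by simp⟩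
  have hTbdd : BddAbove T := ⟨n, hTsub⟩
  have hHT : htilde k n = sSup T := rfl
  have hHmem : htilde k n ∈ T := by rw [hHT]; exact Nat.sSup_mem ⟨0, hT0⟩ hTbdd
  have hHle : ∀ s ∈ T, s ≤ htilde k n := fun s hs => by rw [hHT]; exact le_csSup hTbdd hs
  set S := {s : ℕ | ∃ a : Fin (k - 1) → ℕ, s = ∑ i, a i ∧
    Ideal.Quotient.mk
      (Ideal.span (Set.range fun i : Fin (k - 1 + 1) =>
        (X i : MvPolynomial (Fin (k - 1 + 1)) (ZMod 2)) ^ (n + 1)))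
      (∏ i : Fin (k - 1), (X i.castSucc + X (Fin.last (k - 1))) ^ a i) ≠ 0} with hSdef
  have hZS : zcl k n = sSup S := rfl
  have hcard : ∑ _i : Fin (k-1), n = (k-1) * n := by
    rw [Finset.sum_const, Finset.card_univ, Fintype.card_fin, smul_eq_mul]
  have hmem : (k-1)*n + htilde k n ∈ S := by
    obtain ⟨b, hb, hbn, hbodd⟩ := hHmem
    refine ⟨fun i => n + b i, ?_, (char_lemma n _).mpr
      ⟨fun _ => n, fun i => Nat.le_add_right n (b i), fun i => le_rfl, fun i => hbodd i, ?_⟩⟩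
    · rw [Finset.sum_add_distrib, hcard, hb]
    · have : ∀ i : Fin (k-1), n + b i - n = b i := fun i => by omega
      rw [Finset.sum_congr rfl (fun i _ => this i), ← hb]
      exact hbn
  have hub : ∀ s ∈ S, s ≤ (k-1)*n + htilde k n := by
    rintro s ⟨a, rfl, hq⟩
    obtain ⟨e, hea, hen, hodd, hsum⟩ := (char_lemma n a).mp hq
    have hstep : ∀ i, ∃ b', b' ≤ a i - e i ∧ Odd ((n + b').choose n) ∧ a i ≤ n + b' := by
      intro i
      have h1 : e i &&& (a i - e i) = 0 := by
        rw [← odd_choose_iff]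
        have h2 : e i + (a i - e i) = a i := by have := hea i; omega
        rw [h2]; exact hodd i
      obtain ⟨b', h2, h3, h4⟩ := keyL' n (a i - e i) (e i) (hen i) h1
      refine ⟨b', h2, ?_, by have := hea i; omega⟩
      rw [odd_choose_iff]
      rw [Nat.land_comm]
      exact h3
    choose b' hb1 hb2 hb3 using hstep
    have hsb' : ∑ i, b' i ∈ T :=
      ⟨b', rfl, le_trans (Finset.sum_le_sum fun i _ => hb1 i) hsum, hb2⟩
    calc ∑ i, a i ≤ ∑ i, (n + b' i) := Finset.sum_le_sum fun i _ => hb3 i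
      _ = (k-1)*n + ∑ i, b' i := by rw [Finset.sum_add_distrib, hcard]
      _ ≤ (k-1)*n + htilde k n := by have := hHle _ hsb'; omega
  rw [hZS]
  exact le_antisymm (csSup_le ⟨_, hmem⟩ hub) (le_csSup ⟨_, hub⟩ hmem)
end

section
/- If n is a positive even integer and ℓ is the length of the longest string of consecutive 1's in the binary expansion of n, then for every k ≥ 2^{ℓ+1} − 1 one has zcl_k(n) = k·n. -/
lemma odd_choose_of_and_eq_zero : ∀ M n b : ℕ, n + b = M → n &&& b = 0 →
    (((n + b).choose n : ZMod 2)) = 1 := by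
  intro M
  induction M using Nat.strong_induction_on with
  | _ M IH =>
    intro n b hM hand
    rcases Nat.eq_zero_or_pos M with h0 | hpos
    · have hn : n = 0 := by omega
      have hb : b = 0 := by omega
      subst hn hb; simp
    · have hbit : ¬ (n % 2 = 1 ∧ b % 2 = 1) := by
        intro ⟨h1, h2⟩
        have := Nat.and_mod_two_eq_one.mpr ⟨h1, h2⟩
        rw [hand] at this
        simp at this
      have hn2 : n % 2 ≤ 1 := by omega
      have hb2 : b % 2 ≤ 1 := by omega
      have hmod : (n + b) % 2 = n % 2 + b % 2 := by omega
      have hdiv : (n + b) / 2 = n / 2 + b / 2 := by omega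
      have hand2 : (n / 2) &&& (b / 2) = 0 := by
        rw [← Nat.and_div_two, hand]
      have hlt : n / 2 + b / 2 < M := by omega
      have IH2 := IH _ hlt (n / 2) (b / 2) rfl hand2
      have lucas := @Choose.choose_modEq_choose_mod_mul_choose_div (n + b) n 2 ⟨Nat.prime_two⟩
      have : ((n + b).choose n : ZMod 2) =
          ((((n+b) % 2).choose (n % 2) : ℕ) : ZMod 2) * (((n+b)/2).choose (n/2) : ZMod 2) := by
        have := (ZMod.intCast_eq_intCast_iff _ _ _).mpr lucas
        push_cast at this ⊢
        exact_mod_cast this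
      rw [this, hmod, hdiv, IH2, mul_one]
      have : (n % 2 + b % 2).choose (n % 2) = 1 := by
        interval_cases h1 : n % 2 <;> interval_cases h2 : b % 2 <;> simp_all
      rw [this]
      norm_num

lemma exists_decomp (K : ℕ) : ∀ n : ℕ, ∀ w : ℕ, 0 < w → (∀ t, t < w → n.testBit t = false) →
    (∀ l' j : ℕ, (∀ t, t < l' → n.testBit (j + t)) → 2 ^ (l' + 1) - 2 ≤ K) →
    ∃ b : Fin K → ℕ, (∑ i, b i) = n ∧ ∀ i, 2 ^ (w - 1) ∣ b i ∧ (b i) &&& n = 0 := by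
  intro n
  induction n using Nat.strong_induction_on with
  | _ n IH =>
    intro w hw hlow hrun
    rcases Nat.eq_zero_or_pos n with h0 | hpos
    · exact ⟨fun _ => 0, by simp [h0], fun i => by simp [h0]⟩
    have hex : ∃ t, n.testBit t := Nat.exists_testBit_of_ne_zero hpos.ne'
    set j := Nat.find hex with hj
    have hjbit : n.testBit j := Nat.find_spec hex
    have hjmin : ∀ t, t < j → n.testBit t = false := fun t ht => by
      simpa using Nat.find_min hex ht
    have hwj : w ≤ j := by
      by_contra h
      push_neg at h
      rw [hlow j h] at hjbit; simp at hjbit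
    have hj1 : 1 ≤ j := hw.trans_le hwj
    have hex2 : ∃ t, n.testBit (j + t) = false :=
      ⟨n, Nat.testBit_lt_two_pow (lt_of_lt_of_le (Nat.lt_two_pow_self)
        (Nat.pow_le_pow_right (by norm_num) (Nat.le_add_left _ _)))⟩
    set L := Nat.find hex2 with hLdef
    have hLspec : n.testBit (j + L) = false := Nat.find_spec hex2
    have hLmin : ∀ t, t < L → n.testBit (j + t) := fun t ht => by
      have := Nat.find_min hex2 ht
      simpa using this
    have hL1 : 1 ≤ L := by
      rcases Nat.eq_zero_or_pos L with h | h
      · rw [h, Nat.add_zero] at hLspec; rw [hLspec] at hjbit; simp at hjbit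
      · exact h
    set P := j + L with hPdef
    set c := 2 ^ (L + 1) - 2 with hcdef
    have hcK : c ≤ K := hrun L j hLmin
    set q := n / 2 ^ P with hqdef
    have hsplit : n = 2 ^ P * q + n % 2 ^ P := (Nat.div_add_mod n (2 ^ P)).symm
    have hmodlt : n % 2 ^ P < 2 ^ P := Nat.mod_lt _ (Nat.two_pow_pos _)
    have hr : n % 2 ^ P = 2 ^ j * (2 ^ L - 1) := by
      apply Nat.eq_of_testBit_eq
      intro t
      rw [Nat.testBit_mod_two_pow, Nat.testBit_two_pow_mul]
      by_cases h1 : t < j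
      · simp [hjmin t h1, show ¬ j ≤ t by omega]
      · by_cases h2 : t < P
        · have h3 := hLmin (t - j) (by omega)
          rw [show j + (t - j) = t by omega] at h3
          simp [h3, h2, show j ≤ t by omega, show t - j < L by omega]
        · simp [h2, show ¬ (t - j < L) by omega]
    have hnt : ∀ t, n.testBit t =
        if t < P then (n % 2 ^ P).testBit t else q.testBit (t - P) := by
      intro t
      conv_lhs => rw [hsplit]
      exact Nat.testBit_two_pow_mul_add q hmodlt t
    set n' := 2 ^ P * q with hn'def
    have hn'bit : ∀ t, n'.testBit t = (decide (P ≤ t) && n.testBit t) := by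
      intro t
      rw [hn'def, Nat.testBit_two_pow_mul]
      by_cases h : P ≤ t
      · rw [hnt t]
        simp [h, show ¬ t < P by omega]
      · simp [h, show ¬ P ≤ t by omega]
    have hrpos : 0 < 2 ^ j * (2 ^ L - 1) := by
      have h2 : 2 ≤ 2 ^ L := by
        calc 2 = 2 ^ 1 := rfl
        _ ≤ 2 ^ L := Nat.pow_le_pow_right (by norm_num) hL1
      exact Nat.mul_pos (Nat.two_pow_pos _) (by omega)
    have hn'lt : n' < n := by
      rw [hr] at hsplit
      omega
    have hIH := IH n' hn'lt (P + 1) (by omega)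
      (by
        intro t ht
        rw [hn'bit t]
        by_cases h : t = P
        · simp [h, hLspec]
        · simp [show ¬ P ≤ t by omega])
      (by
        intro l' j' hrun'
        apply hrun l' j'
        intro t ht
        have := hrun' t ht
        rw [hn'bit] at this
        simp only [Bool.and_eq_true, decide_eq_true_eq] at this
        exact this.2)
    obtain ⟨b', hb'sum, hb'⟩ := hIH
    simp only [Nat.add_sub_cancel] at hb'
    refine ⟨fun i => (if (i : ℕ) < c then 2 ^ (j - 1) else 0) + b' i, ?_, ?_⟩
    · rw [Finset.sum_add_distrib, hb'sum]
      have hsum_ite : (∑ i : Fin K, if (i : ℕ) < c then 2 ^ (j - 1) else 0)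
          = c * 2 ^ (j - 1) := by
        rw [Fin.sum_univ_eq_sum_range (fun t => if t < c then 2 ^ (j - 1) else 0) K,
          ← Finset.sum_filter, Finset.range_eq_Ico, Finset.Ico_filter_lt_of_le_right hcK,
          Finset.sum_const, Nat.card_Ico, Nat.sub_zero, smul_eq_mul]
      rw [hsum_ite]
      have hc2 : c * 2 ^ (j - 1) = 2 ^ j * (2 ^ L - 1) := by
        obtain ⟨m, hm⟩ := Nat.exists_eq_add_of_le (Nat.one_le_two_pow (n := L))
        have h2j : 2 ^ j = 2 ^ (j - 1) * 2 := by
          rw [← pow_succ]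
          congr 1
          omega
        have hc' : c = 2 * m := by
          rw [hcdef, pow_succ]
          omega
        rw [hc', h2j, hm]
        have h1m : 1 + m - 1 = m := by omega
        rw [h1m]
        ring
      rw [hc2, ← hr]
      omega
    · intro i
      dsimp only
      obtain ⟨hdvd, hand⟩ := hb' i
      obtain ⟨m, hm⟩ := hdvd
      have hitelt : (if (i : ℕ) < c then 2 ^ (j - 1) else 0) < 2 ^ P := by
        have : 2 ^ (j - 1) < 2 ^ P := Nat.pow_lt_pow_right (by norm_num) (by omega)
        split <;> omega
      have hbi : (if (i : ℕ) < c then 2 ^ (j - 1) else 0) + b' i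
          = 2 ^ P * m + (if (i : ℕ) < c then 2 ^ (j - 1) else 0) := by
        rw [hm]; ring
      constructor
      · apply Nat.dvd_add
        · have h1 : (2 : ℕ) ^ (w - 1) ∣ 2 ^ (j - 1) := pow_dvd_pow 2 (by omega)
          split
          · exact h1
          · exact Dvd.intro 0 rfl
        · exact dvd_trans (pow_dvd_pow 2 (by omega)) ⟨m, hm⟩
      · apply Nat.eq_of_testBit_eq
        intro t
        rw [Nat.testBit_and, Nat.zero_testBit, hbi,
          Nat.testBit_two_pow_mul_add m hitelt t]
        by_cases h1 : t < P
        · -- low part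
          by_cases h2 : (i : ℕ) < c
          · simp only [h2, if_true]
            by_cases h3 : t = j - 1
            · rw [h3, hjmin (j - 1) (by omega)]
              simp
            · rw [Nat.testBit_two_pow_of_ne (by omega)]
              simp [h1]
          · simp [h2, h1]
        · -- high part
          simp only [h1, if_false]
          have : n.testBit t = n'.testBit t ∨ n.testBit t = false := by
            by_cases h : t = P
            · right; rw [h]; exact hLspec
            · left; rw [hn'bit t]; simp [show P ≤ t by omega]
          rcases this with h | h
          · rw [h]
            have : ((b' i).testBit t && n'.testBit t) = false := by
              rw [← Nat.testBit_and, hand, Nat.zero_testBit]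
            rw [← this]
            congr 1
            rw [hm, Nat.testBit_two_pow_mul]
            simp [show P ≤ t by omega]
          · rw [h]; simp

open MvPolynomial

variable {m n : ℕ}

lemma binom_term_eq (c d : Fin (m + 1)) (e t : ℕ) :
    (X c : MvPolynomial (Fin (m + 1)) (ZMod 2)) ^ t * X d ^ (e - t) * (e.choose t : MvPolynomial (Fin (m + 1)) (ZMod 2)) =
      monomial (Finsupp.single c t + Finsupp.single d (e - t)) ((e.choose t : ZMod 2)) := by
  rw [X_pow_eq_monomial, X_pow_eq_monomial, monomial_mul, ← C_eq_coe_nat,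
    mul_comm, C_mul_monomial]
  push_cast
  simp

lemma support_binom_pow (c d : Fin (m + 1)) (e : ℕ) :
    ((X c + X d : MvPolynomial (Fin (m + 1)) (ZMod 2)) ^ e).support ⊆
      (Finset.range (e + 1)).image
        (fun t => Finsupp.single c t + Finsupp.single d (e - t)) := by
  rw [add_pow]
  refine MvPolynomial.support_sum.trans ?_
  intro v hv
  rw [Finset.mem_biUnion] at hv
  obtain ⟨t, ht, hv⟩ := hv
  rw [binom_term_eq] at hv
  have := MvPolynomial.support_monomial_subset hv
  rw [Finset.mem_singleton] at this
  subst this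
  exact Finset.mem_image.mpr ⟨t, ht, rfl⟩

lemma coeff_binom_pow (c d : Fin (m + 1)) (hcd : c ≠ d) (e : ℕ) (hne : n ≤ e) :
    coeff (Finsupp.single c n + Finsupp.single d (e - n))
      ((X c + X d : MvPolynomial (Fin (m + 1)) (ZMod 2)) ^ e) = (e.choose n : ZMod 2) := by
  rw [add_pow]
  rw [MvPolynomial.coeff_sum]
  have : ∀ t ∈ Finset.range (e + 1),
      coeff (Finsupp.single c n + Finsupp.single d (e - n))
        ((X c : MvPolynomial (Fin (m + 1)) (ZMod 2)) ^ t * X d ^ (e - t) * (e.choose t : MvPolynomial (Fin (m + 1)) (ZMod 2)))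
      = if t = n then (e.choose t : ZMod 2) else 0 := by
    intro t _
    rw [binom_term_eq, coeff_monomial]
    congr 1
    simp only [eq_iff_iff]
    constructor
    · intro h
      have := DFunLike.congr_fun h c
      simpa [Finsupp.single_apply, Ne.symm hcd] using this
    · rintro rfl; rfl
  rw [Finset.sum_congr rfl this, Finset.sum_ite_eq' (Finset.range (e + 1)) n]
  simp [Nat.lt_succ_of_le hne]

lemma support_prod_coord_zero (a : Fin m → ℕ) (s : Finset (Fin m)) :
    ∀ g : Fin (m + 1), g ≠ Fin.last m → (∀ i ∈ s, g ≠ Fin.castSucc i) →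
    ∀ v ∈ (∏ i ∈ s, (X (Fin.castSucc i) + X (Fin.last m) :
        MvPolynomial (Fin (m + 1)) (ZMod 2)) ^ a i).support, v g = 0 := by
  classical
  induction s using Finset.induction_on with
  | empty =>
    intro g _ _ v hv
    rw [Finset.prod_empty, MvPolynomial.mem_support_iff, MvPolynomial.coeff_one] at hv
    have : (0 : Fin (m+1) →₀ ℕ) = v := by by_contra h; simp [h] at hv
    rw [← this]; rfl
  | @insert j s hjs ih =>
    intro g hg hgs v hv
    rw [Finset.prod_insert hjs] at hv
    obtain ⟨u, hu, w, hw, rfl⟩ := Finset.mem_add.mp (MvPolynomial.support_mul _ _ hv)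
    have hu' := support_binom_pow (Fin.castSucc j) (Fin.last m) (a j) hu
    obtain ⟨t, _, rfl⟩ := Finset.mem_image.mp hu'
    have h1 : (Finsupp.single (Fin.castSucc j) t + Finsupp.single (Fin.last m) (a j - t)) g = 0 := by
      have hg1 : g ≠ Fin.castSucc j := hgs j (Finset.mem_insert_self _ _)
      simp [Finsupp.single_apply, Ne.symm hg1, Ne.symm hg]
    have h2 : w g = 0 :=
      ih g hg (fun i hi => hgs i (Finset.mem_insert_of_mem hi)) w hw
    rw [Finsupp.add_apply, h1, h2]

lemma coeff_prod_binom (a : Fin m → ℕ) (s : Finset (Fin m)) (hs : ∀ i ∈ s, n ≤ a i) :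
    coeff (∑ i ∈ s, (Finsupp.single (Fin.castSucc i) n + Finsupp.single (Fin.last m) (a i - n)))
      (∏ i ∈ s, (X (Fin.castSucc i) + X (Fin.last m) :
        MvPolynomial (Fin (m + 1)) (ZMod 2)) ^ a i)
      = ∏ i ∈ s, ((a i).choose n : ZMod 2) := by
  classical
  induction s using Finset.induction_on with
  | empty => simp
  | @insert j s hjs ih =>
    rw [Finset.prod_insert hjs, Finset.sum_insert hjs, Finset.prod_insert hjs, coeff_mul]
    set u₀ := Finsupp.single (Fin.castSucc j) n + Finsupp.single (Fin.last m) (a j - n) with hu₀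
    set v₀ := ∑ i ∈ s, (Finsupp.single (Fin.castSucc i) n + Finsupp.single (Fin.last m) (a i - n)) with hv₀
    have hv₀app : v₀ (Fin.castSucc j) = 0 := by
      rw [hv₀, Finsupp.finset_sum_apply]
      apply Finset.sum_eq_zero
      intro i hi
      have hij : i ≠ j := fun h => hjs (h ▸ hi)
      simp [Finsupp.single_apply, Fin.castSucc_inj, hij, (Fin.castSucc_lt_last j).ne',
        (Fin.castSucc_lt_last j).ne]
    have hu₀app : u₀ j.castSucc = n := by
      simp [hu₀, Finsupp.add_apply, Finsupp.single_apply, (Fin.castSucc_lt_last j).ne,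
        (Fin.castSucc_lt_last j).ne']
    rw [Finset.sum_eq_single_of_mem (u₀, v₀) (Finset.HasAntidiagonal.mem_antidiagonal.mpr rfl)]
    · rw [coeff_binom_pow _ _ (Fin.castSucc_lt_last j).ne (a j) (hs j (Finset.mem_insert_self _ _)),
        ih (fun i hi => hs i (Finset.mem_insert_of_mem hi))]
    · rintro ⟨u, v⟩ hmem hne
      rw [Finset.HasAntidiagonal.mem_antidiagonal] at hmem
      by_contra hcc
      have hul : coeff u ((X (Fin.castSucc j) + X (Fin.last m) :
          MvPolynomial (Fin (m + 1)) (ZMod 2)) ^ a j) ≠ 0 := fun h => hcc (by simp [h])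
      have hvr : coeff v (∏ i ∈ s, (X (Fin.castSucc i) + X (Fin.last m) :
          MvPolynomial (Fin (m + 1)) (ZMod 2)) ^ a i) ≠ 0 := fun h => hcc (by simp [h])
      have hu := support_binom_pow (Fin.castSucc j) (Fin.last m) (a j)
        (MvPolynomial.mem_support_iff.mpr hul)
      obtain ⟨t, _, rfl⟩ := Finset.mem_image.mp hu
      have hvz : v (Fin.castSucc j) = 0 := by
        apply support_prod_coord_zero a s (Fin.castSucc j) (Fin.castSucc_lt_last j).ne
          (fun i hi h => hjs ((Fin.castSucc_inj.mp h) ▸ hi))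
        exact MvPolynomial.mem_support_iff.mpr hvr
      have happ := DFunLike.congr_fun hmem (Fin.castSucc j)
      have ht : t = n := by
        simpa [Finsupp.add_apply, Finsupp.single_apply, hvz, hv₀app, hu₀app,
          (Fin.castSucc_lt_last j).ne, (Fin.castSucc_lt_last j).ne'] using happ
      subst ht
      have huu : Finsupp.single (Fin.castSucc j) t + Finsupp.single (Fin.last m) (a j - t) = u₀ := rfl
      rw [huu] at hmem
      have : v = v₀ := by
        have := add_left_cancel hmem
        exact this
      exact hne (by rw [huu, this])



open MvPolynomial in
lemma span_eq_monomial_image (M N : ℕ) :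
    (Set.range fun i : Fin (M + 1) => (X i : MvPolynomial (Fin (M + 1)) (ZMod 2)) ^ (N + 1))
      = (fun s => monomial s (1 : ZMod 2)) '' (Set.range fun i : Fin (M + 1) => Finsupp.single i (N + 1)) := by
  rw [← Set.range_comp]
  apply congrArg
  funext i
  simp [X_pow_eq_monomial]

/-- If `n` is a positive even integer and `l` is the length of the longest string of
consecutive 1's in the binary expansion of `n`, then `zcl_k(n) = k*n`
for every `k ≥ 2^(l+1) - 1`. -/
theorem zcl_eq_of_le (n l : ℕ) (hn : 0 < n) (he : Even n)
    (hex : ∃ j, ∀ t < l, n.testBit (j + t))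
    (hmax : ∀ l', (∃ j, ∀ t < l', n.testBit (j + t)) → l' ≤ l)
    (k : ℕ) (hk : 2 ^ (l + 1) - 1 ≤ k) :
    zcl k n = k * n := by
  classical
  have h2l : 2 ≤ 2 ^ (l + 1) := by
    calc (2 : ℕ) = 2 ^ 1 := rfl
    _ ≤ 2 ^ (l + 1) := Nat.pow_le_pow_right (by norm_num) (by omega)
  have hk1 : 1 ≤ k := by omega
  set m := k - 1 with hm
  have hmk : m + 1 = k := by omega
  -- the upper bound
  have hub : ∀ s ∈ {s : ℕ | ∃ a : Fin (k - 1) → ℕ, s = ∑ i, a i ∧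
      Ideal.Quotient.mk
        (Ideal.span (Set.range fun i : Fin (k - 1 + 1) =>
          (X i : MvPolynomial (Fin (k - 1 + 1)) (ZMod 2)) ^ (n + 1)))
        (∏ i : Fin (k - 1), (X i.castSucc + X (Fin.last (k - 1))) ^ a i) ≠ 0},
      s ≤ k * n := by
    rintro s ⟨a, rfl, hne⟩
    rw [Ne, Ideal.Quotient.eq_zero_iff_mem, span_eq_monomial_image,
      mem_ideal_span_monomial_image] at hne
    push_neg at hne
    obtain ⟨d, hd, hdle⟩ := hne
    have hdle' : ∀ i : Fin (m + 1), d i ≤ n := by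
      intro i
      have := hdle (Finsupp.single i (n + 1)) ⟨i, rfl⟩
      rw [Finsupp.single_le_iff] at this
      omega
    have hhom : (∏ i : Fin m, (X (Fin.castSucc i) + X (Fin.last m) :
        MvPolynomial (Fin (m + 1)) (ZMod 2)) ^ a i).IsHomogeneous (∑ i, a i) := by
      have := MvPolynomial.IsHomogeneous.prod Finset.univ
        (fun i : Fin m => (X (Fin.castSucc i) + X (Fin.last m) :
          MvPolynomial (Fin (m + 1)) (ZMod 2)) ^ a i) (fun i => a i)
        (fun i _ => by
          simpa using ((isHomogeneous_X (ZMod 2) (Fin.castSucc i)).add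
            (isHomogeneous_X (ZMod 2) (Fin.last m))).pow (a i))
      exact this
    have hdeg : d.degree = ∑ i, a i := by
      by_contra hne'
      exact (MvPolynomial.mem_support_iff.mp hd) (hhom.coeff_eq_zero hne')
    have : d.degree ≤ k * n := by
      rw [Finsupp.degree]
      calc ∑ i ∈ d.support, d i ≤ ∑ i : Fin (m + 1), d i :=
            Finset.sum_le_sum_of_subset (Finset.subset_univ _)
      _ ≤ ∑ _i : Fin (m + 1), n := Finset.sum_le_sum (fun i _ => hdle' i)
      _ = (m + 1) * n := by rw [Finset.sum_const, Finset.card_univ, Fintype.card_fin, smul_eq_mul]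
      _ = k * n := by rw [hmk]
    omega
  -- the lower bound witness
  obtain ⟨b, hbsum, hb⟩ := exists_decomp m n 1 one_pos
    (by
      intro t ht
      interval_cases t
      simp [Nat.even_iff.mp he])
    (by
      intro l' j hrun
      have hl' : l' ≤ l := hmax l' ⟨j, hrun⟩
      have : 2 ^ (l' + 1) ≤ 2 ^ (l + 1) := Nat.pow_le_pow_right (by norm_num) (by omega)
      omega)
  have hband : ∀ i, b i &&& n = 0 := fun i => (hb i).2
  set a : Fin m → ℕ := fun i => n + b i with ha
  have hasum : ∑ i, a i = k * n := by
    rw [ha]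
    rw [Finset.sum_add_distrib, hbsum, Finset.sum_const, Finset.card_univ, Fintype.card_fin,
      smul_eq_mul]
    have : m * n + n = (m + 1) * n := by ring
    rw [this, hmk]
  set D : Fin (m + 1) →₀ ℕ := ∑ i : Fin m,
    (Finsupp.single (Fin.castSucc i) n + Finsupp.single (Fin.last m) (a i - n)) with hD
  have hDapp : ∀ g, D g = n := by
    intro g
    rw [hD, Finsupp.finset_sum_apply]
    induction g using Fin.lastCases with
    | last =>
      have : ∀ i ∈ Finset.univ (α := Fin m),
          ((Finsupp.single (Fin.castSucc i) n + Finsupp.single (Fin.last m) (a i - n)))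
            (Fin.last m) = b i := by
        intro i _
        simp [ha, Finsupp.add_apply, Finsupp.single_apply, (Fin.castSucc_lt_last i).ne,
          (Fin.castSucc_lt_last i).ne']
      rw [Finset.sum_congr rfl this, hbsum]
    | cast j =>
      have : ∀ i ∈ Finset.univ (α := Fin m),
          ((Finsupp.single (Fin.castSucc i) n + Finsupp.single (Fin.last m) (a i - n)))
            (Fin.castSucc j) = if i = j then n else 0 := by
        intro i _
        simp [Finsupp.add_apply, Finsupp.single_apply, Fin.castSucc_inj,
          (Fin.castSucc_lt_last j).ne']
      rw [Finset.sum_congr rfl this, Finset.sum_ite_eq' Finset.univ j]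
      simp
  have hcoeff : coeff D (∏ i : Fin m, (X (Fin.castSucc i) + X (Fin.last m) :
      MvPolynomial (Fin (m + 1)) (ZMod 2)) ^ a i) = 1 := by
    rw [hD, coeff_prod_binom a Finset.univ (fun i _ => Nat.le_add_right n (b i))]
    apply Finset.prod_eq_one
    intro i _
    have hand : n &&& b i = 0 := by rw [Nat.and_comm]; exact hband i
    have := odd_choose_of_and_eq_zero (n + b i) n (b i) rfl hand
    exact this
  have hlb : k * n ∈ {s : ℕ | ∃ a : Fin (k - 1) → ℕ, s = ∑ i, a i ∧
      Ideal.Quotient.mk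
        (Ideal.span (Set.range fun i : Fin (k - 1 + 1) =>
          (X i : MvPolynomial (Fin (k - 1 + 1)) (ZMod 2)) ^ (n + 1)))
        (∏ i : Fin (k - 1), (X i.castSucc + X (Fin.last (k - 1))) ^ a i) ≠ 0} := by
    refine ⟨a, hasum.symm, ?_⟩
    rw [Ne, Ideal.Quotient.eq_zero_iff_mem, span_eq_monomial_image,
      mem_ideal_span_monomial_image]
    push_neg
    refine ⟨D, MvPolynomial.mem_support_iff.mpr (by rw [hcoeff]; norm_num), ?_⟩
    rintro si ⟨i, rfl⟩
    rw [Finsupp.single_le_iff, hDapp i]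
    omega
  -- conclude
  rw [zcl]
  apply le_antisymm
  · exact csSup_le ⟨k * n, hlb⟩ hub
  · exact le_csSup ⟨k * n, hub⟩ hlb
end
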